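/- arXiv:1711.03627 — 2 statements merged into one kernel-verified Lean document; each statement's English description precedes it below -/
import Mathlib

section
/- Let P be a transition kernel of a transient, irreducible, locally finite random walk on a countable set S, and let φ(x) = log P(x₀, x₁) on the path space X⁺. Given a positive P-harmonic function h : S → ℝ⁺ (h(a) = Σ_b P(a,b)h(b)), define μ on cylinders by μ([a₁,…,aₙ]) = P(a₁,a₂)⋯P(a_{n−1},aₙ) h(aₙ). Then μ extends to a Radon measure on X⁺ satisfying L_φ* μ = μ, and the map h ↦ μ is a linear injection from positive P-harmonic functions to 1-conformal measures. -/
open MeasureTheory ENNReal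
open scoped Classical

variable {S : Type*}

/-- The one-sided topological Markov shift. -/
abbrev MShift (Adj : S → S → Prop) : Type _ :=
  {x : ℕ → S // ∀ i, Adj (x i) (x (i + 1))}

/-- The left shift. -/
def shiftMap (Adj : S → S → Prop) (x : MShift Adj) : MShift Adj :=
  ⟨fun i => x.1 (i + 1), fun i => x.2 (i + 1)⟩

/-- The Ruelle operator on non-negative functions. -/
noncomputable def Ruelle (Adj : S → S → Prop) (φ : MShift Adj → ℝ)
    (f : MShift Adj → ℝ≥0∞) (x : MShift Adj) : ℝ≥0∞ :=
  ∑' y : {y : MShift Adj // shiftMap Adj y = x}, ENNReal.ofReal (Real.exp (φ y.1)) * f y.1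

/-- `n`-step transition probabilities. -/
noncomputable def Ppow (P : S → S → ℝ) : ℕ → S → S → ℝ
  | 0 => fun a b => if a = b then 1 else 0
  | n + 1 => fun a b => ∑' c, P a c * Ppow P n c b

/-- Transitivity of the underlying graph. -/
def TransitiveShift (Adj : S → S → Prop) : Prop :=
  ∀ a b : S, ∃ (n : ℕ) (x : MShift Adj), x.1 0 = a ∧ ((shiftMap Adj)^[n] x).1 0 = b

section Construction

variable (P : S → S → ℝ)

/-- cylinder weight -/
noncomputable def wt (h : S → ℝ) (n : ℕ) (w : ℕ → S) : ℝ≥0∞ :=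
  ENNReal.ofReal ((∏ i ∈ Finset.range n, P (w i) (w (i + 1))) * h (w n))

/-- cylinder set -/
def cyl (n : ℕ) (w : ℕ → S) : Set (MShift (fun a b : S => 0 < P a b)) :=
  {x | ∀ i ≤ n, x.1 i = w i}

/-- normalized words of length `k` -/
def Wd (k : ℕ) : Type _ := {v : ℕ → S // ∀ i, v i = v (min i k)}

instance (k : ℕ) [Countable S] : Countable (Wd (S := S) k) := by
  have : Function.Injective (fun v : Wd (S := S) k => (fun j : Fin (k+1) => v.1 j.1)) := by
    intro v w hvw
    refine Subtype.ext (funext fun i => ?_)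
    have h1 : v.1 i = v.1 (min i k) := v.2 i
    have h2 : w.1 i = w.1 (min i k) := w.2 i
    have hm : min i k < k + 1 := Nat.lt_succ_of_le (min_le_right _ _)
    have := congrFun hvw ⟨min i k, hm⟩
    simp only at this
    rw [h1, h2, this]
  exact this.countable

variable {P}

theorem wt_congr {h : S → ℝ} {n : ℕ} {v w : ℕ → S} (hvw : ∀ i ≤ n, v i = w i) :
    wt P h n v = wt P h n w := by
  unfold wt
  congr 1
  rw [hvw n le_rfl]
  congr 1
  refine Finset.prod_congr rfl fun i hi => ?_
  rw [Finset.mem_range] at hi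
  rw [hvw i (le_of_lt hi), hvw (i+1) hi]

theorem wt_step {h : S → ℝ} (hPnn : ∀ a b, 0 ≤ P a b) (hh0 : ∀ a, 0 ≤ h a)
    (hharm : ∀ a, HasSum (fun b => P a b * h b) (h a)) (n : ℕ) (w : ℕ → S) :
    wt P h n w = ∑' b : S, wt P h (n + 1) (Function.update w (n + 1) b) := by
  set C := ∏ i ∈ Finset.range n, P (w i) (w (i + 1)) with hC
  have hC0 : 0 ≤ C := Finset.prod_nonneg fun i _ => hPnn _ _
  have hterm : ∀ b : S, wt P h (n + 1) (Function.update w (n + 1) b)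
      = ENNReal.ofReal (C * (P (w n) b * h b)) := by
    intro b
    unfold wt
    congr 1
    have hu : ∀ i ≤ n, Function.update w (n + 1) b i = w i := fun i hi =>
      Function.update_of_ne (by omega) _ _
    have hub : Function.update w (n + 1) b (n + 1) = b := Function.update_self _ _ _
    rw [Finset.prod_range_succ]
    have hprod : (∏ i ∈ Finset.range n,
        P (Function.update w (n + 1) b i) (Function.update w (n + 1) b (i + 1))) = C := by
      refine Finset.prod_congr rfl fun i hi => ?_
      rw [Finset.mem_range] at hi
      rw [hu i (le_of_lt hi), hu (i+1) hi]
    rw [hprod, hu n le_rfl, hub]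
    ring
  rw [funext hterm]
  have hsum : HasSum (fun b => C * (P (w n) b * h b)) (C * h (w n)) := (hharm (w n)).mul_left C
  rw [← ENNReal.ofReal_tsum_of_nonneg (fun b => mul_nonneg hC0 (mul_nonneg (hPnn _ _) (hh0 _)))
    hsum.summable, hsum.tsum_eq]
  unfold wt
  rw [hC]

theorem wt_mono {h : S → ℝ} (hPnn : ∀ a b, 0 ≤ P a b) (hh0 : ∀ a, 0 ≤ h a)
    (hharm : ∀ a, HasSum (fun b => P a b * h b) (h a)) {m n : ℕ} (hmn : m ≤ n) (w : ℕ → S) :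
    wt P h n w ≤ wt P h m w := by
  induction n, hmn using Nat.le_induction with
  | base => exact le_rfl
  | succ n hmn ih =>
    refine le_trans ?_ ih
    rw [wt_step hPnn hh0 hharm n w]
    have := ENNReal.le_tsum (f := fun b => wt P h (n + 1) (Function.update w (n + 1) b)) (w (n+1))
    rwa [Function.update_eq_self] at this

theorem wt_refine {h : S → ℝ} (hPnn : ∀ a b, 0 ≤ P a b) (hh0 : ∀ a, 0 ≤ h a)
    (hharm : ∀ a, HasSum (fun b => P a b * h b) (h a)) (d : ℕ) :
    ∀ (n : ℕ) (w : ℕ → S), wt P h n w =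
      ∑' v : Wd (S := S) (n + d), if ∀ i ≤ n, v.1 i = w i then wt P h (n + d) v.1 else 0 := by
  induction d with
  | zero =>
    intro n w
    have hv₀mem : ∀ i, w (min i n) = w (min (min i n) n) := by
      intro i; rw [min_eq_left (min_le_right i n)]
    set v₀ : Wd (S := S) (n + 0) := ⟨fun i => w (min i n), hv₀mem⟩ with hv₀
    have hext : ∀ i ≤ n, v₀.1 i = w i := by
      intro i hi
      show w (min i n) = w i
      rw [min_eq_left (by omega : i ≤ n)]
    rw [tsum_eq_single v₀ ?_]
    · rw [if_pos hext]
      exact wt_congr (fun i hi => hext i hi) |>.symm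
    · intro v hv
      split_ifs with hcond
      · refine absurd (Subtype.ext (funext fun i => ?_)) hv
        have h1 := v.2 i
        rw [h1, hcond _ (min_le_right i (n+0))]
        show w _ = w (min i n)
        congr 1
      · rfl
  | succ d ih =>
    intro n w
    rw [show n + (d + 1) = (n + 1) + d from by omega]
    rw [wt_step hPnn hh0 hharm n w]
    have : ∀ b : S, wt P h (n + 1) (Function.update w (n + 1) b) =
        ∑' v : Wd (S := S) ((n + 1) + d),
          if ∀ i ≤ n + 1, v.1 i = Function.update w (n + 1) b i
          then wt P h ((n + 1) + d) v.1 else 0 := fun b => ih (n + 1) _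
    rw [funext this, ENNReal.tsum_comm]
    refine tsum_congr fun v => ?_
    rw [tsum_eq_single (v.1 (n + 1)) ?_]
    · refine if_congr ?_ rfl rfl
      constructor
      · intro hc i hi
        have := hc i (by omega)
        rwa [Function.update_of_ne (by omega)] at this
      · intro hc i hi
        rcases Nat.lt_or_ge i (n + 1) with hlt | hge
        · rw [Function.update_of_ne (by omega)]
          exact hc i (by omega)
        · have : i = n + 1 := by omega
          subst this
          rw [Function.update_self]
    · intro b hb
      split_ifs with hc
      · have := hc (n + 1) le_rfl
        rw [Function.update_self] at this
        exact absurd this.symm hb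
      · rfl


/-- admissible word -/
def Adm (P : S → S → ℝ) (n : ℕ) (w : ℕ → S) : Prop := ∀ i < n, 0 < P (w i) (w (i + 1))

theorem adm_of_mem_cyl {n : ℕ} {w : ℕ → S} {x : MShift (fun a b : S => 0 < P a b)}
    (hx : x ∈ cyl P n w) : Adm P n w := by
  intro i hi
  have h1 := x.2 i
  rwa [hx i (le_of_lt hi), hx (i+1) hi] at h1

theorem wt_zero_of_not_adm (hPnn : ∀ a b, 0 ≤ P a b) {h : S → ℝ} {n : ℕ} {w : ℕ → S}
    (hw : ¬ Adm P n w) : wt P h n w = 0 := by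
  unfold Adm at hw
  push_neg at hw
  obtain ⟨i, hi, hP⟩ := hw
  have : P (w i) (w (i+1)) = 0 := le_antisymm hP (hPnn _ _)
  unfold wt
  rw [Finset.prod_eq_zero (Finset.mem_range.mpr hi) this, zero_mul, ENNReal.ofReal_zero]

theorem cyl_nonempty (hPnn : ∀ a b, 0 ≤ P a b) (hstoch : ∀ a, HasSum (fun b => P a b) 1)
    {n : ℕ} {w : ℕ → S} (hw : Adm P n w) : (cyl P n w).Nonempty := by
  have hsucc : ∀ a : S, ∃ b, 0 < P a b := by
    intro a
    by_contra hcon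
    push_neg at hcon
    have : ∀ b, P a b = 0 := fun b => le_antisymm (hcon b) (hPnn a b)
    have h0 : HasSum (fun b => P a b) 0 := by
      rw [funext this]; exact hasSum_zero
    exact one_ne_zero ((hstoch a).unique h0)
  choose g hg using hsucc
  have main : ∃ f : ℕ → S, (∀ i, f i = if i ≤ n then w i else g^[i - n] (w n)) :=
    ⟨fun i => if i ≤ n then w i else g^[i - n] (w n), fun _ => rfl⟩
  obtain ⟨f, hfval⟩ := main
  have hfw : ∀ i ≤ n, f i = w i := fun i hi => by rw [hfval, if_pos hi]
  have hchain : ∀ i, 0 < P (f i) (f (i + 1)) := by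
    intro i
    rcases Nat.lt_or_ge i n with hlt | hge
    · rw [hfw i (le_of_lt hlt), hfw (i+1) hlt]
      exact hw i hlt
    · have hfi : f (i + 1) = g (f i) := by
        rcases Nat.eq_or_lt_of_le hge with heq | hlt'
        · have h1 : f i = w n := by rw [hfw i (le_of_eq heq.symm), ← heq]
          have h2 : f (i + 1) = g (w n) := by
            rw [hfval, if_neg (by omega : ¬ i + 1 ≤ n),
              show i + 1 - n = 1 by omega, Function.iterate_one]
          rw [h1, h2]
        · have h2 : f (i + 1) = g (g^[i - n] (w n)) := by
            rw [hfval, if_neg (by omega : ¬ i + 1 ≤ n),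
              show i + 1 - n = (i - n) + 1 by omega, Function.iterate_succ_apply']
          have h1 : f i = g^[i - n] (w n) := by
            rw [hfval, if_neg (by omega : ¬ i ≤ n)]
          rw [h1, h2]
      rw [hfi]
      exact hg (f i)
  exact ⟨⟨f, hchain⟩, fun i hi => hfw i hi⟩

/-- reachable sets -/
def Reach (P : S → S → ℝ) (a : S) : ℕ → Set S
  | 0 => {a}
  | j+1 => ⋃ c ∈ Reach P a j, {b | 0 < P c b}

theorem reach_finite (hlocF : ∀ a : S, {b : S | 0 < P a b}.Finite) (a : S) :
    ∀ j, (Reach P a j).Finite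
  | 0 => Set.finite_singleton a
  | j+1 => Set.Finite.biUnion (reach_finite hlocF a j) (fun c _ => hlocF c)

section Top
variable [TopologicalSpace S] [DiscreteTopology S]

theorem isOpen_cyl (n : ℕ) (w : ℕ → S) : IsOpen (cyl P n w) := by
  have : cyl P n w = ⋂ i ∈ Set.Iic n, (fun x : MShift (fun a b : S => 0 < P a b) => x.1 i) ⁻¹' {w i} := by
    ext x
    simp only [cyl, Set.mem_setOf_eq, Set.mem_iInter, Set.mem_preimage, Set.mem_singleton_iff,
      Set.mem_Iic]
  rw [this]
  exact (Set.finite_Iic n).isOpen_biInter fun i _ =>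
    (IsOpen.preimage ((continuous_apply i).comp continuous_subtype_val) (isOpen_discrete _))

theorem isCompact_cyl (hlocF : ∀ a : S, {b : S | 0 < P a b}.Finite) (n : ℕ) (w : ℕ → S) :
    IsCompact (cyl P n w) := by
  set F : ℕ → Set S := fun i => if i ≤ n then {w i} else Reach P (w n) (i - n) with hF
  have hFfin : ∀ i, (F i).Finite := by
    intro i
    rcases le_or_gt i n with hi | hi
    · rw [hF]; simp only [if_pos hi]; exact Set.finite_singleton _
    · rw [hF]; simp only [if_neg (by omega : ¬ i ≤ n)]; exact reach_finite hlocF _ _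
  have hA : IsCompact (Set.pi Set.univ F) := isCompact_univ_pi fun i => (hFfin i).isCompact
  rw [Topology.IsEmbedding.subtypeVal.isCompact_iff]
  have himg : Subtype.val '' cyl P n w =
      {f : ℕ → S | (∀ i, 0 < P (f i) (f (i+1))) ∧ ∀ i ≤ n, f i = w i} := by
    ext f
    constructor
    · rintro ⟨x, hx, rfl⟩
      exact ⟨x.2, hx⟩
    · rintro ⟨h1, h2⟩
      exact ⟨⟨f, h1⟩, h2, rfl⟩
  have hclosed : IsClosed (Subtype.val '' cyl P n w) := by
    rw [himg]
    have : {f : ℕ → S | (∀ i, 0 < P (f i) (f (i+1))) ∧ ∀ i ≤ n, f i = w i} =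
        (⋂ i, (fun f : ℕ → S => (f i, f (i+1))) ⁻¹' {p : S × S | 0 < P p.1 p.2}) ∩
        (⋂ i ∈ Set.Iic n, (fun f : ℕ → S => f i) ⁻¹' {w i}) := by
      ext f
      simp only [Set.mem_setOf_eq, Set.mem_inter_iff, Set.mem_iInter, Set.mem_preimage,
        Set.mem_singleton_iff, Set.mem_Iic]
    rw [this]
    refine IsClosed.inter (isClosed_iInter fun i => ?_) (isClosed_biInter fun i _ => ?_)
    · exact IsClosed.preimage (Continuous.prodMk (continuous_apply i) (continuous_apply (i+1)))
        (isClosed_discrete _)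
    · exact IsClosed.preimage (continuous_apply i) (isClosed_discrete _)
  refine hA.of_isClosed_subset hclosed ?_
  rw [himg]
  rintro f ⟨h1, h2⟩
  intro i _
  rcases le_or_gt i n with hi | hi
  · rw [hF]; simp only [if_pos hi, Set.mem_singleton_iff]; exact h2 i hi
  · rw [hF]; simp only [if_neg (by omega : ¬ i ≤ n)]
    have key : ∀ j, f (n + j) ∈ Reach P (w n) j := by
      intro j
      induction j with
      | zero => simpa [Reach] using h2 n le_rfl
      | succ j ih =>
        show f (n + j + 1) ∈ Reach P (w n) (j + 1)
        exact Set.mem_biUnion ih (h1 (n + j))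
    have h := key (i - n)
    rwa [show n + (i - n) = i by omega] at h

end Top

section Meas
variable [MeasurableSpace S] [MeasurableSingletonClass S]

theorem measurable_eval (i : ℕ) :
    Measurable (fun x : MShift (fun a b : S => 0 < P a b) => x.1 i) :=
  (measurable_pi_apply i).comp measurable_subtype_coe

theorem measurableSet_cyl (n : ℕ) (w : ℕ → S) : MeasurableSet (cyl P n w) := by
  have : cyl P n w = ⋂ i ∈ Set.Iic n, (fun x : MShift (fun a b : S => 0 < P a b) => x.1 i) ⁻¹' {w i} := by
    ext x
    simp only [cyl, Set.mem_setOf_eq, Set.mem_iInter, Set.mem_preimage, Set.mem_singleton_iff,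
      Set.mem_Iic]
  rw [this]
  exact MeasurableSet.biInter (Set.to_countable _)
    fun i _ => measurable_eval i (measurableSet_singleton _)

end Meas

theorem wt_le_sum_of_cover {h : S → ℝ} (hPnn : ∀ a b, 0 ≤ P a b) (hh0 : ∀ a, 0 ≤ h a)
    (hharm : ∀ a, HasSum (fun b => P a b * h b) (h a))
    (hstoch : ∀ a, HasSum (fun b => P a b) 1) :
    ∀ (d n : ℕ) (w : ℕ → S) (t : Finset ℕ) (nn : ℕ → ℕ) (ww : ℕ → ℕ → S),
      (∀ i ∈ t, nn i ≤ n + d) → Adm P n w →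
      cyl P n w ⊆ ⋃ i ∈ t, cyl P (nn i) (ww i) →
      wt P h n w ≤ ∑ i ∈ t, wt P h (nn i) (ww i) := by
  intro d
  induction d with
  | zero =>
    intro n w t nn ww hle hadm hcov
    by_cases hwin : ∃ i ∈ t, nn i ≤ n ∧ ∀ j ≤ nn i, ww i j = w j
    · obtain ⟨i, hit, hni, hwi⟩ := hwin
      calc wt P h n w ≤ wt P h (nn i) w := wt_mono hPnn hh0 hharm hni w
        _ = wt P h (nn i) (ww i) := (wt_congr fun j hj => hwi j hj).symm
        _ ≤ ∑ i ∈ t, wt P h (nn i) (ww i) := Finset.single_le_sum (f := fun i => wt P h (nn i) (ww i)) (fun _ _ => zero_le) hit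
    · push_neg at hwin
      obtain ⟨x, hx⟩ := cyl_nonempty hPnn hstoch hadm
      obtain ⟨i, hit, hxi⟩ := Set.mem_iUnion₂.mp (hcov hx)
      obtain ⟨j, hj, hne⟩ := hwin i hit (by have := hle i hit; omega)
      exact absurd ((hxi j hj).symm.trans (hx j (le_trans hj (by have := hle i hit; omega)))) hne
  | succ d ih =>
    intro n w t nn ww hle hadm hcov
    by_cases hwin : ∃ i ∈ t, nn i ≤ n ∧ ∀ j ≤ nn i, ww i j = w j
    · obtain ⟨i, hit, hni, hwi⟩ := hwin
      calc wt P h n w ≤ wt P h (nn i) w := wt_mono hPnn hh0 hharm hni w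
        _ = wt P h (nn i) (ww i) := (wt_congr fun j hj => hwi j hj).symm
        _ ≤ ∑ i ∈ t, wt P h (nn i) (ww i) := Finset.single_le_sum (f := fun i => wt P h (nn i) (ww i)) (fun _ _ => zero_le) hit
    · push_neg at hwin
      have hdisj : ∀ i ∈ t, nn i ≤ n → cyl P n w ∩ cyl P (nn i) (ww i) = ∅ := by
        intro i hit hni
        rw [Set.eq_empty_iff_forall_notMem]
        rintro x ⟨hx1, hx2⟩
        obtain ⟨j, hj, hne⟩ := hwin i hit hni
        exact hne ((hx2 j hj).symm.trans (hx1 j (le_trans hj hni)))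
      have key : ∀ b : S, wt P h (n+1) (Function.update w (n+1) b) ≤
          ∑ i ∈ t.filter (fun i =>
            (cyl P (n+1) (Function.update w (n+1) b) ∩ cyl P (nn i) (ww i)).Nonempty),
            wt P h (nn i) (ww i) := by
        intro b
        set u := Function.update w (n+1) b with hu
        have hun : ∀ i ≤ n, u i = w i := fun i hi => Function.update_of_ne (by omega) _ _
        by_cases hb : 0 < P (w n) b
        · have hadm' : Adm P (n+1) u := by
            intro i hi
            rcases Nat.lt_or_ge i n with hlt | hge
            · rw [hun i (by omega), hun (i+1) (by omega)]
              exact hadm i hlt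
            · have : i = n := by omega
              subst this
              rw [hun i le_rfl, hu, Function.update_self]
              exact hb
          refine ih (n+1) u _ nn ww ?_ hadm' ?_
          · intro i hi
            rw [Finset.mem_filter] at hi
            have := hle i hi.1
            omega
          · intro x hxu
            have hxw : x ∈ cyl P n w := fun j hj => by rw [hxu j (by omega), hun j hj]
            obtain ⟨i, hit, hxi⟩ := Set.mem_iUnion₂.mp (hcov hxw)
            exact Set.mem_iUnion₂.mpr ⟨i, Finset.mem_filter.mpr ⟨hit, ⟨x, hxu, hxi⟩⟩, hxi⟩
        · have : wt P h (n+1) u = 0 := by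
            refine wt_zero_of_not_adm hPnn ?_
            intro hadm'
            exact hb (by have := hadm' n (by omega); rwa [hun n le_rfl, hu,
              Function.update_self] at this)
          rw [this]
          exact zero_le
      calc wt P h n w = ∑' b : S, wt P h (n+1) (Function.update w (n+1) b) :=
            wt_step hPnn hh0 hharm n w
        _ ≤ ∑' b : S, ∑ i ∈ t.filter (fun i =>
              (cyl P (n+1) (Function.update w (n+1) b) ∩ cyl P (nn i) (ww i)).Nonempty),
              wt P h (nn i) (ww i) := ENNReal.tsum_le_tsum key
        _ = ∑' b : S, ∑ i ∈ t, (if (cyl P (n+1) (Function.update w (n+1) b) ∩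
              cyl P (nn i) (ww i)).Nonempty then wt P h (nn i) (ww i) else 0) := by
            refine tsum_congr fun b => (Finset.sum_filter _ _)
        _ = ∑ i ∈ t, ∑' b : S, (if (cyl P (n+1) (Function.update w (n+1) b) ∩
              cyl P (nn i) (ww i)).Nonempty then wt P h (nn i) (ww i) else 0) := by
            rw [Summable.tsum_finsetSum (fun i _ => ENNReal.summable)]
        _ ≤ ∑ i ∈ t, wt P h (nn i) (ww i) := by
            refine Finset.sum_le_sum fun i hit => ?_
            rcases le_or_gt (nn i) n with hni | hni
            · have : ∀ b : S, (if (cyl P (n+1) (Function.update w (n+1) b) ∩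
                  cyl P (nn i) (ww i)).Nonempty then wt P h (nn i) (ww i) else 0) = 0 := by
                intro b
                rw [if_neg]
                rintro ⟨x, hx1, hx2⟩
                have hxw : x ∈ cyl P n w := fun j hj => by
                  rw [hx1 j (by omega), Function.update_of_ne (by omega)]
                have hd := hdisj i hit hni
                rw [Set.eq_empty_iff_forall_notMem] at hd
                exact hd x ⟨hxw, hx2⟩
              rw [tsum_congr this, tsum_zero]
              exact zero_le
            · rw [tsum_eq_single (ww i (n+1)) ?_]
              · split_ifs with hcond
                · exact le_rfl
                · exact zero_le
              · intro b hb
                rw [if_neg]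
                rintro ⟨x, hx1, hx2⟩
                refine hb ?_
                have h1 : x.1 (n+1) = b := by
                  rw [hx1 (n+1) le_rfl, Function.update_self]
                have h2 : x.1 (n+1) = ww i (n+1) := hx2 (n+1) (by omega)
                rw [← h1, h2]


section OM
variable [Countable S]

variable (P) in
/-- premeasure -/
noncomputable def m0 (h : S → ℝ) (A : Set (MShift (fun a b : S => 0 < P a b))) : ℝ≥0∞ :=
  if A = ∅ then 0 else
    ⨅ (p : {p : ℕ × (ℕ → S) // A ⊆ cyl P p.1 p.2}), wt P h p.1.1 p.1.2

variable (P) in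
/-- the outer measure -/
noncomputable def μom (h : S → ℝ) :
    OuterMeasure (MShift (fun a b : S => 0 < P a b)) :=
  OuterMeasure.ofFunction (m0 P h) (if_pos rfl)

theorem m0_le {h : S → ℝ} {A : Set (MShift (fun a b : S => 0 < P a b))} {n : ℕ} {w : ℕ → S}
    (hA : A ⊆ cyl P n w) : m0 P h A ≤ wt P h n w := by
  unfold m0
  split_ifs with hA0
  · exact zero_le
  · exact iInf_le (fun p : {p : ℕ × (ℕ → S) // A ⊆ cyl P p.1 p.2} => wt P h p.1.1 p.1.2)
      ⟨(n, w), hA⟩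

theorem μom_le {h : S → ℝ} {A : Set (MShift (fun a b : S => 0 < P a b))} {n : ℕ} {w : ℕ → S}
    (hA : A ⊆ cyl P n w) : μom P h A ≤ wt P h n w :=
  le_trans (OuterMeasure.ofFunction_le A) (m0_le hA)

section Topo
variable [TopologicalSpace S] [DiscreteTopology S]

theorem μom_cyl {h : S → ℝ} (hPnn : ∀ a b, 0 ≤ P a b) (hh0 : ∀ a, 0 ≤ h a)
    (hharm : ∀ a, HasSum (fun b => P a b * h b) (h a))
    (hstoch : ∀ a, HasSum (fun b => P a b) 1)
    (hlocF : ∀ a : S, {b : S | 0 < P a b}.Finite) (n : ℕ) (w : ℕ → S) :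
    μom P h (cyl P n w) = wt P h n w := by
  by_cases hadm : Adm P n w
  · refine le_antisymm (μom_le subset_rfl) ?_
    show wt P h n w ≤ OuterMeasure.ofFunction (m0 P h) _ (cyl P n w)
    refine le_of_le_of_eq ?_ (OuterMeasure.ofFunction_apply (m := m0 P h) (if_pos rfl) (cyl P n w)).symm
    refine le_iInf fun A => le_iInf fun hcov => ?_
    by_cases hfin : ∀ i, m0 P h (A i) ≠ ⊤
    · refine ENNReal.le_of_forall_pos_le_add fun ε hε _ => ?_
      obtain ⟨δ, hδpos, hδsum⟩ := ENNReal.exists_pos_sum_of_countable'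
        (ENNReal.coe_ne_zero.mpr hε.ne') ℕ
      have hchoice : ∀ i : ℕ, ∃ p : ℕ × (ℕ → S), ((A i).Nonempty →
          (A i ⊆ cyl P p.1 p.2 ∧ wt P h p.1 p.2 ≤ m0 P h (A i) + δ i)) := by
        intro i
        by_cases hne : (A i).Nonempty
        · have hm : m0 P h (A i) < m0 P h (A i) + δ i :=
            ENNReal.lt_add_right (hfin i) (hδpos i).ne'
          have hdef : m0 P h (A i) =
              ⨅ (p : {p : ℕ × (ℕ → S) // A i ⊆ cyl P p.1 p.2}), wt P h p.1.1 p.1.2 := by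
            unfold m0
            rw [if_neg hne.ne_empty]
          nth_rewrite 1 [hdef] at hm
          obtain ⟨⟨p, hp⟩, hlt⟩ := iInf_lt_iff.mp hm
          exact ⟨p, fun _ => ⟨hp, hlt.le⟩⟩
        · exact ⟨(0, fun _ => w 0), fun hne' => absurd hne' hne⟩
      choose pf hpf using hchoice
      have hcov2 : cyl P n w ⊆ ⋃ i : ℕ, (if (A i).Nonempty
          then cyl P (pf i).1 (pf i).2 else ∅) := by
        intro x hx
        obtain ⟨i, hi⟩ := Set.mem_iUnion.mp (hcov hx)
        have hne : (A i).Nonempty := ⟨x, hi⟩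
        exact Set.mem_iUnion.mpr ⟨i, by rw [if_pos hne]; exact (hpf i hne).1 hi⟩
      obtain ⟨t, ht⟩ := (isCompact_cyl hlocF n w).elim_finite_subcover
        (fun i : ℕ => (if (A i).Nonempty then cyl P (pf i).1 (pf i).2 else ∅))
        (fun i => by
          show IsOpen (if (A i).Nonempty then cyl P (pf i).1 (pf i).2 else ∅)
          by_cases hne : (A i).Nonempty
          · rw [if_pos hne]; exact isOpen_cyl _ _
          · rw [if_neg hne]; exact isOpen_empty) hcov2
      set t' := t.filter (fun i => (A i).Nonempty) with ht'
      have hcov3 : cyl P n w ⊆ ⋃ i ∈ t', cyl P (pf i).1 (pf i).2 := by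
        intro x hx
        obtain ⟨i, hit, hxi⟩ := Set.mem_iUnion₂.mp (ht hx)
        by_cases hne : (A i).Nonempty
        · rw [if_pos hne] at hxi
          exact Set.mem_iUnion₂.mpr ⟨i, Finset.mem_filter.mpr ⟨hit, hne⟩, hxi⟩
        · rw [if_neg hne] at hxi
          exact absurd hxi (Set.notMem_empty x)
      have hmain := wt_le_sum_of_cover hPnn hh0 hharm hstoch
        (t'.sup fun i => (pf i).1) n w t' (fun i => (pf i).1) (fun i => (pf i).2)
        (fun i hit => le_trans (Finset.le_sup (f := fun i => (pf i).1) hit)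
          (Nat.le_add_left _ n)) hadm hcov3
      calc wt P h n w ≤ ∑ i ∈ t', wt P h (pf i).1 (pf i).2 := hmain
        _ ≤ ∑ i ∈ t', (m0 P h (A i) + δ i) := by
            refine Finset.sum_le_sum fun i hit => ?_
            exact (hpf i (Finset.mem_filter.mp hit).2).2
        _ ≤ ∑' i : ℕ, (m0 P h (A i) + δ i) :=
            ENNReal.sum_le_tsum t'
        _ = (∑' i, m0 P h (A i)) + ∑' i, δ i := ENNReal.tsum_add
        _ ≤ (∑' i, m0 P h (A i)) + ε := by
            exact add_le_add le_rfl hδsum.le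
    · push_neg at hfin
      obtain ⟨i, hi⟩ := hfin
      have := ENNReal.le_tsum (f := fun i => m0 P h (A i)) i
      rw [hi] at this
      exact le_top.trans this
  · have hempty : cyl P n w = ∅ := by
      rw [Set.eq_empty_iff_forall_notMem]
      exact fun x hx => hadm (adm_of_mem_cyl hx)
    rw [hempty, wt_zero_of_not_adm hPnn hadm]
    exact measure_empty

end Topo

theorem μom_split {h : S → ℝ} (hPnn : ∀ a b, 0 ≤ P a b) (hh0 : ∀ a, 0 ≤ h a)
    (hharm : ∀ a, HasSum (fun b => P a b * h b) (h a)) (k : ℕ) (u : ℕ → S)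
    (B : Set (MShift (fun a b : S => 0 < P a b))) :
    μom P h (B ∩ cyl P k u) + μom P h (B \ cyl P k u) ≤ m0 P h B := by
  unfold m0
  split_ifs with hB0
  · subst hB0
    simp
  · refine le_iInf fun ⟨⟨n, w⟩, hBsub⟩ => ?_
    show μom P h (B ∩ cyl P k u) + μom P h (B \ cyl P k u) ≤ wt P h n w
    set N := max n k with hN
    -- index over normalized words
    have hsplit1 : B ∩ cyl P k u ⊆ ⋃ v : Wd (S := S) N,
        (if (∀ i ≤ n, v.1 i = w i) ∧ (∀ i ≤ k, v.1 i = u i) then cyl P N v.1 else ∅) := by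
      rintro x ⟨hxB, hxC⟩
      have hxD := hBsub hxB
      refine Set.mem_iUnion.mpr ⟨⟨fun i => x.1 (min i N), fun i => by
        show x.1 (min i N) = x.1 (min (min i N) N)
        rw [min_eq_left (min_le_right i N)]⟩, ?_⟩
      rw [if_pos ⟨fun i hi => by
          show x.1 (min i N) = w i
          rw [min_eq_left (le_trans hi (le_max_left n k))]; exact hxD i hi,
        fun i hi => by
          show x.1 (min i N) = u i
          rw [min_eq_left (le_trans hi (le_max_right n k))]; exact hxC i hi⟩]
      intro i hi
      show x.1 i = x.1 (min i N)
      rw [min_eq_left hi]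
    have hsplit2 : B \ cyl P k u ⊆ ⋃ v : Wd (S := S) N,
        (if (∀ i ≤ n, v.1 i = w i) ∧ ¬ (∀ i ≤ k, v.1 i = u i) then cyl P N v.1 else ∅) := by
      rintro x ⟨hxB, hxC⟩
      have hxD := hBsub hxB
      refine Set.mem_iUnion.mpr ⟨⟨fun i => x.1 (min i N), fun i => by
        show x.1 (min i N) = x.1 (min (min i N) N)
        rw [min_eq_left (min_le_right i N)]⟩, ?_⟩
      rw [if_pos ⟨fun i hi => by
          show x.1 (min i N) = w i
          rw [min_eq_left (le_trans hi (le_max_left n k))]; exact hxD i hi,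
        fun hcon => hxC fun i hi => by
          have h2 : x.1 (min i N) = u i := hcon i hi
          rwa [min_eq_left (le_trans hi (le_max_right n k))] at h2⟩]
      intro i hi
      show x.1 i = x.1 (min i N)
      rw [min_eq_left hi]
    have hb1 : μom P h (B ∩ cyl P k u) ≤ ∑' v : Wd (S := S) N,
        (if (∀ i ≤ n, v.1 i = w i) ∧ (∀ i ≤ k, v.1 i = u i) then wt P h N v.1 else 0) := by
      refine le_trans (le_trans (measure_mono hsplit1) (measure_iUnion_le _)) ?_
      refine ENNReal.tsum_le_tsum fun v => ?_
      split_ifs with hc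
      · exact μom_le subset_rfl
      · exact le_of_eq measure_empty
    have hb2 : μom P h (B \ cyl P k u) ≤ ∑' v : Wd (S := S) N,
        (if (∀ i ≤ n, v.1 i = w i) ∧ ¬ (∀ i ≤ k, v.1 i = u i) then wt P h N v.1 else 0) := by
      refine le_trans (le_trans (measure_mono hsplit2) (measure_iUnion_le _)) ?_
      refine ENNReal.tsum_le_tsum fun v => ?_
      split_ifs with hc
      · exact μom_le subset_rfl
      · exact le_of_eq measure_empty
    refine le_trans (add_le_add hb1 hb2) ?_
    rw [← ENNReal.tsum_add]
    have hrefine := wt_refine hPnn hh0 hharm (N - n) n w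
    rw [show n + (N - n) = N from by omega] at hrefine
    rw [hrefine]
    refine ENNReal.tsum_le_tsum fun v => ?_
    by_cases hw : ∀ i ≤ n, v.1 i = w i
    · by_cases hu : ∀ i ≤ k, v.1 i = u i
      · rw [if_pos ⟨hw, hu⟩, if_neg (fun hc => hc.2 hu), if_pos hw, add_zero]
      · rw [if_neg (fun hc => hu hc.2), if_pos ⟨hw, hu⟩, if_pos hw, zero_add]
    · rw [if_neg (fun hc => hw hc.1), if_neg (fun hc => hw hc.1), if_neg hw, add_zero]

section MeasGen
variable [MeasurableSpace S] [MeasurableSingletonClass S]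

theorem msble_single (i : ℕ) (s : S) :
    MeasurableSet[MeasurableSpace.generateFrom
      {A : Set (MShift (fun a b : S => 0 < P a b)) | ∃ n wv, A = cyl P n wv}]
      {x : MShift (fun a b : S => 0 < P a b) | x.1 i = s} := by
  have : {x : MShift (fun a b : S => 0 < P a b) | x.1 i = s} =
      ⋃ v : {v : Wd (S := S) i // v.1 i = s}, cyl P i v.1.1 := by
    ext x
    constructor
    · intro hx
      refine Set.mem_iUnion.mpr ⟨⟨⟨fun j => x.1 (min j i), fun j => by
        show x.1 (min j i) = x.1 (min (min j i) i)
        rw [min_eq_left (min_le_right j i)]⟩, by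
        show x.1 (min i i) = s
        rw [min_self]; exact hx⟩, ?_⟩
      intro j hj
      show x.1 j = x.1 (min j i)
      rw [min_eq_left hj]
    · intro hx
      obtain ⟨v, hv⟩ := Set.mem_iUnion.mp hx
      show x.1 i = s
      rw [hv i le_rfl]
      exact v.2
  rw [this]
  exact MeasurableSet.iUnion fun v =>
    MeasurableSpace.measurableSet_generateFrom ⟨i, v.1.1, rfl⟩

theorem msble_eq :
    (inferInstance : MeasurableSpace (MShift (fun a b : S => 0 < P a b))) =
      MeasurableSpace.generateFrom
        {A : Set (MShift (fun a b : S => 0 < P a b)) | ∃ n wv, A = cyl P n wv} := by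
  refine le_antisymm ?_ (MeasurableSpace.generateFrom_le ?_)
  · show MeasurableSpace.comap (Subtype.val) MeasurableSpace.pi ≤ _
    rw [MeasurableSpace.comap_le_iff_le_map]
    show (⨆ i : ℕ, MeasurableSpace.comap (fun f : ℕ → S => f i) inferInstance) ≤ _
    refine iSup_le fun i => ?_
    rw [MeasurableSpace.comap_le_iff_le_map, MeasurableSpace.map_comp]
    intro B _
    show MeasurableSet[MeasurableSpace.generateFrom _]
      ((fun x : MShift (fun a b : S => 0 < P a b) => x.1 i) ⁻¹' B)
    have : (fun x : MShift (fun a b : S => 0 < P a b) => x.1 i) ⁻¹' B =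
        ⋃ s ∈ B, {x : MShift (fun a b : S => 0 < P a b) | x.1 i = s} := by
      ext x
      simp only [Set.mem_preimage, Set.mem_iUnion, Set.mem_setOf_eq]
      exact ⟨fun hx => ⟨x.1 i, hx, rfl⟩, fun ⟨s, hs, hxs⟩ => hxs ▸ hs⟩
    rw [this]
    exact MeasurableSet.biUnion (Set.to_countable B) fun s _ => msble_single i s
  · rintro A ⟨n, wv, rfl⟩
    exact measurableSet_cyl n wv

theorem msble_le_carath {h : S → ℝ} (hPnn : ∀ a b, 0 ≤ P a b) (hh0 : ∀ a, 0 ≤ h a)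
    (hharm : ∀ a, HasSum (fun b => P a b * h b) (h a)) :
    (inferInstance : MeasurableSpace (MShift (fun a b : S => 0 < P a b))) ≤
      (μom P h).caratheodory := by
  rw [msble_eq (P := P)]
  refine MeasurableSpace.generateFrom_le ?_
  rintro A ⟨k, u, rfl⟩
  refine (OuterMeasure.isCaratheodory_iff_le _).mpr fun t => ?_
  have happly : μom P h t = ⨅ (f : ℕ → Set (MShift (fun a b : S => 0 < P a b)))
      (_ : t ⊆ Set.iUnion f), ∑' i, m0 P h (f i) :=
    OuterMeasure.ofFunction_apply (m := m0 P h) (if_pos rfl) t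
  rw [show (μom P h) t = μom P h t from rfl, happly]
  refine le_iInf fun f => le_iInf fun hf => ?_
  calc μom P h (t ∩ cyl P k u) + μom P h (t \ cyl P k u)
      ≤ (∑' i, μom P h (f i ∩ cyl P k u)) + ∑' i, μom P h (f i \ cyl P k u) := by
        refine add_le_add (le_trans (measure_mono ?_) (measure_iUnion_le _))
          (le_trans (measure_mono ?_) (measure_iUnion_le _))
        · rw [← Set.iUnion_inter]
          exact Set.inter_subset_inter_left _ hf
        · rw [← Set.iUnion_diff]
          exact Set.diff_subset_diff_left hf
    _ = ∑' i, (μom P h (f i ∩ cyl P k u) + μom P h (f i \ cyl P k u)) :=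
        ENNReal.tsum_add.symm
    _ ≤ ∑' i, m0 P h (f i) := ENNReal.tsum_le_tsum fun i => μom_split hPnn hh0 hharm k u (f i)

end MeasGen
end OM

section Meas2
variable [Countable S] [MeasurableSpace S] [MeasurableSingletonClass S]
  [TopologicalSpace S] [DiscreteTopology S]

variable (P) in
/-- the measure associated to a positive harmonic function -/
noncomputable def muH (h : S → ℝ) (hPnn : ∀ a b, 0 ≤ P a b) (hh0 : ∀ a, 0 ≤ h a)
    (hharm : ∀ a, HasSum (fun b => P a b * h b) (h a)) :
    Measure (MShift (fun a b : S => 0 < P a b)) :=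
  (μom P h).toMeasure (msble_le_carath hPnn hh0 hharm)

theorem muH_cyl {h : S → ℝ} (hPnn : ∀ a b, 0 ≤ P a b) (hh0 : ∀ a, 0 ≤ h a)
    (hharm : ∀ a, HasSum (fun b => P a b * h b) (h a))
    (hstoch : ∀ a, HasSum (fun b => P a b) 1)
    (hlocF : ∀ a : S, {b : S | 0 < P a b}.Finite) (n : ℕ) (w : ℕ → S) :
    muH P h hPnn hh0 hharm (cyl P n w) = wt P h n w := by
  rw [muH, MeasureTheory.toMeasure_apply _ _ (measurableSet_cyl n w)]
  exact μom_cyl hPnn hh0 hharm hstoch hlocF n w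

theorem mem_cyl0 {a : S} {x : MShift (fun a b : S => 0 < P a b)} :
    x ∈ cyl P 0 (fun _ => a) ↔ x.1 0 = a := by
  constructor
  · intro hx; exact hx 0 le_rfl
  · intro hx i hi
    have : i = 0 := Nat.le_zero.mp hi
    rw [this]; exact hx

theorem isPiSystem_cyl :
    IsPiSystem {A : Set (MShift (fun a b : S => 0 < P a b)) | ∃ n wv, A = cyl P n wv} := by
  rintro A ⟨n, w, rfl⟩ B ⟨m, v, rfl⟩ hne
  obtain ⟨x, hx1, hx2⟩ := hne
  refine ⟨max n m, x.1, ?_⟩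
  ext y
  constructor
  · rintro ⟨hy1, hy2⟩ i hi
    rcases le_or_gt i n with h1 | h1
    · rw [hy1 i h1, ← hx1 i h1]
    · have h2 : i ≤ m := by omega
      rw [hy2 i h2, ← hx2 i h2]
  · intro hy
    constructor
    · intro i hi
      rw [hy i (le_trans hi (le_max_left n m)), hx1 i hi]
    · intro i hi
      rw [hy i (le_trans hi (le_max_right n m)), hx2 i hi]

theorem measure_ext_cyl {μ ν : Measure (MShift (fun a b : S => 0 < P a b))}
    (hfin : ∀ a : S, μ (cyl P 0 (fun _ => a)) ≠ ⊤)
    (heq : ∀ (n : ℕ) (w : ℕ → S), μ (cyl P n w) = ν (cyl P n w)) : μ = ν := by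
  refine Measure.ext_of_generateFrom_of_cover_subset (msble_eq (P := P)) isPiSystem_cyl
    (T := Set.range (fun a : S => cyl P 0 (fun _ => a))) ?_ (Set.countable_range _) ?_ ?_ ?_
  · rintro A ⟨a, rfl⟩
    exact ⟨0, fun _ => a, rfl⟩
  · ext x
    simp only [Set.mem_sUnion, Set.mem_range, Set.mem_univ, iff_true]
    exact ⟨cyl P 0 (fun _ => x.1 0), ⟨x.1 0, rfl⟩, mem_cyl0.mpr rfl⟩
  · rintro A ⟨a, rfl⟩
    exact hfin a
  · rintro A ⟨n, w, rfl⟩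
    exact heq n w

theorem lintegral_part (μ : Measure (MShift (fun a b : S => 0 < P a b)))
    (F : MShift (fun a b : S => 0 < P a b) → ℝ≥0∞) (hF : Measurable F) :
    ∫⁻ x, F x ∂μ = ∑' a : S, ∫⁻ x in cyl P 0 (fun _ => a), F x ∂μ := by
  have h1 : ∀ x : MShift (fun a b : S => 0 < P a b),
      F x = ∑' a : S, (cyl P 0 (fun _ => a)).indicator F x := by
    intro x
    rw [tsum_eq_single (x.1 0) ?_]
    · rw [Set.indicator_of_mem (mem_cyl0.mpr rfl)]
    · intro a ha
      rw [Set.indicator_of_notMem (fun hmem => ha (mem_cyl0.mp hmem).symm)]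
  calc ∫⁻ x, F x ∂μ = ∫⁻ x, ∑' a : S, (cyl P 0 (fun _ => a)).indicator F x ∂μ :=
        lintegral_congr h1
    _ = ∑' a : S, ∫⁻ x, (cyl P 0 (fun _ => a)).indicator F x ∂μ :=
        lintegral_tsum fun a => (hF.indicator (measurableSet_cyl _ _)).aemeasurable
    _ = ∑' a : S, ∫⁻ x in cyl P 0 (fun _ => a), F x ∂μ :=
        tsum_congr fun a => lintegral_indicator (measurableSet_cyl _ _) F

theorem muH_cyl0 {h : S → ℝ} (hPnn : ∀ a b, 0 ≤ P a b) (hh0 : ∀ a, 0 ≤ h a)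
    (hharm : ∀ a, HasSum (fun b => P a b * h b) (h a))
    (hstoch : ∀ a, HasSum (fun b => P a b) 1)
    (hlocF : ∀ a : S, {b : S | 0 < P a b}.Finite) (a : S) :
    muH P h hPnn hh0 hharm (cyl P 0 (fun _ => a)) = ENNReal.ofReal (h a) := by
  rw [muH_cyl hPnn hh0 hharm hstoch hlocF 0 (fun _ => a)]
  unfold wt
  rw [Finset.prod_range_zero, one_mul]

end Meas2

section Conf
variable [Countable S] [MeasurableSpace S] [MeasurableSingletonClass S]
  [TopologicalSpace S] [DiscreteTopology S]

variable (P) in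
/-- prepend a letter to a path -/
noncomputable def consb (b : S)
    (p : {y : MShift (fun a b : S => 0 < P a b) // 0 < P b (y.1 0)}) :
    MShift (fun a b : S => 0 < P a b) :=
  ⟨fun i => Nat.casesOn i b p.1.1, fun i => Nat.casesOn i p.2 (fun j => p.1.2 j)⟩

variable (P) in
/-- prepend `b` where possible -/
noncomputable def Tb (b : S) (x : MShift (fun a b : S => 0 < P a b)) :
    MShift (fun a b : S => 0 < P a b) :=
  if hx : x ∈ {y : MShift (fun a b : S => 0 < P a b) | 0 < P b (y.1 0)}
  then consb P b ⟨x, hx⟩ else x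

theorem measurable_consb (b : S) : Measurable (consb P b) := by
  refine Measurable.subtype_mk (measurable_pi_lambda _ fun i => ?_)
  cases i with
  | zero => exact measurable_const
  | succ j => exact (measurable_eval j).comp measurable_subtype_coe

theorem measurableSet_posb (b : S) :
    MeasurableSet {y : MShift (fun a b : S => 0 < P a b) | 0 < P b (y.1 0)} := by
  have : {y : MShift (fun a b : S => 0 < P a b) | 0 < P b (y.1 0)} =
      (fun y : MShift (fun a b : S => 0 < P a b) => y.1 0) ⁻¹' {s : S | 0 < P b s} := rfl
  rw [this]
  exact measurable_eval 0 ((Set.to_countable _).measurableSet)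

theorem measurable_gb (b : S) : Measurable (fun x : MShift (fun a b : S => 0 < P a b) =>
    ENNReal.ofReal (P b (x.1 0))) :=
  (measurable_of_countable (fun s : S => ENNReal.ofReal (P b s))).comp (measurable_eval 0)

theorem measurable_Tb (b : S) : Measurable (Tb P b) := by
  unfold Tb
  exact Measurable.dite (measurable_consb b) measurable_subtype_coe (measurableSet_posb b)

theorem Tb_pos {b : S} {x : MShift (fun a b : S => 0 < P a b)} (hx : 0 < P b (x.1 0)) :
    Tb P b x = consb P b ⟨x, hx⟩ := dif_pos hx

theorem ruelle_eq (hPnn : ∀ a b, 0 ≤ P a b) (f : MShift (fun a b : S => 0 < P a b) → ℝ≥0∞)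
    (x : MShift (fun a b : S => 0 < P a b)) :
    Ruelle (fun a b : S => 0 < P a b) (fun x => Real.log (P (x.1 0) (x.1 1))) f x
      = ∑' b : S, ENNReal.ofReal (P b (x.1 0)) * f (Tb P b x) := by
  unfold Ruelle
  let e : {b : S // 0 < P b (x.1 0)} ≃
      {y : MShift (fun a b : S => 0 < P a b) // shiftMap (fun a b : S => 0 < P a b) y = x} :=
    { toFun := fun bp => ⟨consb P bp.1 ⟨x, bp.2⟩, Subtype.ext (funext fun i => rfl)⟩
      invFun := fun yp => ⟨yp.1.1 0, by
        have h1 : yp.1.1 1 = x.1 0 := congrArg (fun z => z.1 0) yp.2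
        have h2 := yp.1.2 0
        rwa [h1] at h2⟩
      left_inv := fun bp => Subtype.ext rfl
      right_inv := fun yp => Subtype.ext (Subtype.ext (funext fun i => by
        cases i with
        | zero => rfl
        | succ j => exact (congrArg (fun z => z.1 j) yp.2).symm)) }
  rw [← Equiv.tsum_eq e]
  have hterm : ∀ bp : {b : S // 0 < P b (x.1 0)},
      ENNReal.ofReal (Real.exp (Real.log (P ((e bp).1.1 0) ((e bp).1.1 1)))) * f (e bp).1
        = ENNReal.ofReal (P bp.1 (x.1 0)) * f (Tb P bp.1 x) := by
    intro bp
    have h0 : (e bp).1.1 0 = bp.1 := rfl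
    have h1 : (e bp).1.1 1 = x.1 0 := rfl
    rw [h0, h1, Real.exp_log bp.2, Tb_pos bp.2]
    rfl
  rw [tsum_congr hterm]
  refine tsum_subtype_eq_of_support_subset
    (f := fun b : S => ENNReal.ofReal (P b (x.1 0)) * f (Tb P b x))
    (s := {b : S | 0 < P b (x.1 0)}) ?_
  intro b hb
  by_contra hbp
  simp only [Set.mem_setOf_eq] at hbp
  apply hb
  show ENNReal.ofReal (P b (x.1 0)) * f (Tb P b x) = 0
  rw [ENNReal.ofReal_eq_zero.mpr (by
    rcases lt_or_eq_of_le (hPnn b (x.1 0)) with hlt | heq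
    · exact absurd hlt hbp
    · exact le_of_eq heq.symm), zero_mul]

variable {h : S → ℝ}

theorem lint_dens (hPnn : ∀ a b, 0 ≤ P a b) (hh0 : ∀ a, 0 ≤ h a)
    (hharm : ∀ a, HasSum (fun b => P a b * h b) (h a))
    (hstoch : ∀ a, HasSum (fun b => P a b) 1)
    (hlocF : ∀ a : S, {b : S | 0 < P a b}.Finite) (b : S) :
    ∫⁻ x, ENNReal.ofReal (P b (x.1 0)) ∂(muH P h hPnn hh0 hharm)
      = ENNReal.ofReal (h b) := by
  rw [lintegral_part _ _ (measurable_gb b)]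
  have hterm : ∀ a : S, ∫⁻ x in cyl P 0 (fun _ => a),
      ENNReal.ofReal (P b (x.1 0)) ∂(muH P h hPnn hh0 hharm)
        = ENNReal.ofReal (P b a * h a) := by
    intro a
    have hcongr : ∀ x ∈ cyl P 0 (fun _ => a),
        ENNReal.ofReal (P b (x.1 0)) = ENNReal.ofReal (P b a) := by
      intro x hx
      rw [mem_cyl0.mp hx]
    rw [setLIntegral_congr_fun (measurableSet_cyl 0 _) hcongr,
      setLIntegral_const, muH_cyl0 hPnn hh0 hharm hstoch hlocF a,
      ← ENNReal.ofReal_mul (hPnn b a)]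
  rw [tsum_congr hterm,
    ← ENNReal.ofReal_tsum_of_nonneg (fun a => mul_nonneg (hPnn b a) (hh0 a)) (hharm b).summable,
    (hharm b).tsum_eq]

theorem map_Tb_eq (hPnn : ∀ a b, 0 ≤ P a b) (hh0 : ∀ a, 0 ≤ h a)
    (hharm : ∀ a, HasSum (fun b => P a b * h b) (h a))
    (hstoch : ∀ a, HasSum (fun b => P a b) 1)
    (hlocF : ∀ a : S, {b : S | 0 < P a b}.Finite) (b : S) :
    ((muH P h hPnn hh0 hharm).withDensity
        (fun x => ENNReal.ofReal (P b (x.1 0)))).map (Tb P b)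
      = (muH P h hPnn hh0 hharm).restrict (cyl P 0 (fun _ => b)) := by
  set μ := muH P h hPnn hh0 hharm with hμ
  have happ : ∀ (n : ℕ) (w : ℕ → S),
      (μ.withDensity (fun x => ENNReal.ofReal (P b (x.1 0)))).map (Tb P b) (cyl P n w)
        = ∫⁻ x, (Tb P b ⁻¹' cyl P n w).indicator
            (fun x => ENNReal.ofReal (P b (x.1 0))) x ∂μ := by
    intro n w
    rw [Measure.map_apply (measurable_Tb b) (measurableSet_cyl n w),
      withDensity_apply _ ((measurable_Tb b) (measurableSet_cyl n w)),
      ← lintegral_indicator ((measurable_Tb b) (measurableSet_cyl n w))]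
  refine measure_ext_cyl (fun a => ?_) (fun n w => ?_)
  · -- finiteness
    rw [happ 0 (fun _ => a)]
    refine ne_top_of_le_ne_top ?_ (lintegral_mono (fun x => Set.indicator_le_self _ _ x))
    rw [lint_dens hPnn hh0 hharm hstoch hlocF b]
    exact ENNReal.ofReal_ne_top
  · rw [happ n w, Measure.restrict_apply (measurableSet_cyl n w)]
    by_cases hbw : b = w 0
    · have hsub : cyl P n w ∩ cyl P 0 (fun _ => b) = cyl P n w := by
        refine Set.inter_eq_self_of_subset_left ?_
        intro x hx
        exact mem_cyl0.mpr ((hx 0 (Nat.zero_le n)).trans hbw.symm)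
      rw [hsub]
      cases n with
      | zero =>
        have hind : ∀ x : MShift (fun a b : S => 0 < P a b),
            (Tb P b ⁻¹' cyl P 0 w).indicator
              (fun x => ENNReal.ofReal (P b (x.1 0))) x = ENNReal.ofReal (P b (x.1 0)) := by
          intro x
          by_cases hgx : 0 < P b (x.1 0)
          · refine Set.indicator_of_mem ?_ _
            show Tb P b x ∈ cyl P 0 w
            rw [Tb_pos hgx]
            intro i hi
            have hi0 : i = 0 := Nat.le_zero.mp hi
            subst hi0
            exact hbw
          · have hg0 : ENNReal.ofReal (P b (x.1 0)) = 0 :=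
              ENNReal.ofReal_eq_zero.mpr (not_lt.mp hgx)
            simp only [Set.indicator_apply, hg0, ite_self]
        rw [lintegral_congr hind, lint_dens hPnn hh0 hharm hstoch hlocF b,
          muH_cyl hPnn hh0 hharm hstoch hlocF 0 w]
        unfold wt
        rw [Finset.prod_range_zero, one_mul, hbw]
      | succ m =>
        have hind : ∀ x : MShift (fun a b : S => 0 < P a b),
            (Tb P b ⁻¹' cyl P (m+1) w).indicator
              (fun x => ENNReal.ofReal (P b (x.1 0))) x
              = (cyl P m (fun j => w (j+1))).indicator
                (fun x => ENNReal.ofReal (P b (x.1 0))) x := by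
          intro x
          by_cases hgx : 0 < P b (x.1 0)
          · have hiff : x ∈ Tb P b ⁻¹' cyl P (m+1) w ↔ x ∈ cyl P m (fun j => w (j+1)) := by
              constructor
              · intro hx j hj
                have := hx (j+1) (by omega)
                rw [Tb_pos hgx] at this
                exact this
              · intro hx i hi
                rw [Tb_pos hgx]
                cases i with
                | zero => exact hbw
                | succ j => exact hx j (by omega)
            by_cases hmem : x ∈ cyl P m (fun j => w (j+1))
            · rw [Set.indicator_of_mem (hiff.mpr hmem), Set.indicator_of_mem hmem]
            · rw [Set.indicator_of_notMem (fun hc => hmem (hiff.mp hc)),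
                Set.indicator_of_notMem hmem]
          · have hg0 : ENNReal.ofReal (P b (x.1 0)) = 0 :=
              ENNReal.ofReal_eq_zero.mpr (not_lt.mp hgx)
            simp only [Set.indicator_apply, hg0, ite_self]
        rw [lintegral_congr hind, lintegral_indicator (measurableSet_cyl m _)]
        have hcongr : ∀ x ∈ cyl P m (fun j => w (j+1)),
            ENNReal.ofReal (P b (x.1 0)) = ENNReal.ofReal (P b (w 1)) := by
          intro x hx
          rw [hx 0 (Nat.zero_le m)]
        rw [setLIntegral_congr_fun (measurableSet_cyl m _) hcongr,
          setLIntegral_const, muH_cyl hPnn hh0 hharm hstoch hlocF m _,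
          muH_cyl hPnn hh0 hharm hstoch hlocF (m+1) w]
        unfold wt
        rw [hbw, ← ENNReal.ofReal_mul (hPnn (w 0) (w 1))]
        congr 1
        rw [Finset.prod_range_succ']
        ring
    · -- b ≠ w 0 : both sides zero
      have hrhs : cyl P n w ∩ cyl P 0 (fun _ => b) = ∅ := by
        rw [Set.eq_empty_iff_forall_notMem]
        rintro x ⟨hx1, hx2⟩
        exact hbw ((mem_cyl0.mp hx2).symm.trans (hx1 0 (Nat.zero_le n)))
      rw [hrhs, measure_empty]
      have hind : ∀ x : MShift (fun a b : S => 0 < P a b),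
          (Tb P b ⁻¹' cyl P n w).indicator
            (fun x => ENNReal.ofReal (P b (x.1 0))) x = 0 := by
        intro x
        by_cases hgx : 0 < P b (x.1 0)
        · refine Set.indicator_of_notMem ?_ _
          intro hx
          have := hx 0 (Nat.zero_le n)
          rw [Tb_pos hgx] at this
          exact hbw this
        · have hg0 : ENNReal.ofReal (P b (x.1 0)) = 0 :=
            ENNReal.ofReal_eq_zero.mpr (not_lt.mp hgx)
          simp only [Set.indicator_apply, hg0, ite_self]
      rw [lintegral_congr hind, lintegral_zero]

theorem conformal (hPnn : ∀ a b, 0 ≤ P a b) (hh0 : ∀ a, 0 ≤ h a)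
    (hharm : ∀ a, HasSum (fun b => P a b * h b) (h a))
    (hstoch : ∀ a, HasSum (fun b => P a b) 1)
    (hlocF : ∀ a : S, {b : S | 0 < P a b}.Finite)
    (f : MShift (fun a b : S => 0 < P a b) → ℝ≥0∞) (hf : Measurable f) :
    ∫⁻ x, Ruelle (fun a b : S => 0 < P a b)
        (fun x => Real.log (P (x.1 0) (x.1 1))) f x ∂(muH P h hPnn hh0 hharm)
      = ∫⁻ x, f x ∂(muH P h hPnn hh0 hharm) := by
  set μ := muH P h hPnn hh0 hharm with hμ
  have hgb : ∀ b : S, Measurable (fun x : MShift (fun a b : S => 0 < P a b) =>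
      ENNReal.ofReal (P b (x.1 0))) := fun b => measurable_gb b
  have hterm : ∀ b : S, Measurable (fun x : MShift (fun a b : S => 0 < P a b) =>
      ENNReal.ofReal (P b (x.1 0)) * f (Tb P b x)) :=
    fun b => (hgb b).mul (hf.comp (measurable_Tb b))
  calc ∫⁻ x, Ruelle (fun a b : S => 0 < P a b)
        (fun x => Real.log (P (x.1 0) (x.1 1))) f x ∂μ
      = ∫⁻ x, ∑' b : S, ENNReal.ofReal (P b (x.1 0)) * f (Tb P b x) ∂μ :=
        lintegral_congr (fun x => ruelle_eq hPnn f x)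
    _ = ∑' b : S, ∫⁻ x, ENNReal.ofReal (P b (x.1 0)) * f (Tb P b x) ∂μ :=
        lintegral_tsum (fun b => (hterm b).aemeasurable)
    _ = ∑' b : S, ∫⁻ x, f x ∂(μ.restrict (cyl P 0 (fun _ => b))) := by
        refine tsum_congr fun b => ?_
        rw [← map_Tb_eq hPnn hh0 hharm hstoch hlocF b,
          lintegral_map hf (measurable_Tb b)]
        exact (lintegral_withDensity_eq_lintegral_mul μ (hgb b)
          (hf.comp (measurable_Tb b))).symm
    _ = ∫⁻ x, f x ∂μ := (lintegral_part μ f hf).symm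

end Conf

end Construction


/-- For a transient, irreducible, locally finite random walk `P`, every positive
`P`-harmonic function `h` gives rise to a Radon measure `μ_h` on path space, with
`μ_h([a₁,…,aₙ]) = P(a₁,a₂)⋯P(a_{n−1},aₙ) h(aₙ)`, which is `1`-conformal for the
potential `φ(x) = log P(x₀, x₁)`; the assignment `h ↦ μ_h` is linear and injective. -/
theorem harmonic_to_conformal [Countable S] [MeasurableSpace S]
    [MeasurableSingletonClass S] [TopologicalSpace S] [DiscreteTopology S]
    (P : S → S → ℝ) (hPnn : ∀ a b, 0 ≤ P a b)
    (hstoch : ∀ a, HasSum (fun b => P a b) 1)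
    (hirr : TransitiveShift (fun a b => 0 < P a b))
    (hlocF : ∀ a : S, {b : S | 0 < P a b}.Finite)
    (hlocB : ∀ b : S, {a : S | 0 < P a b}.Finite)
    (htransient : ∀ a b : S, Summable (fun n => Ppow P n a b)) :
    ∃ Φ : (S → ℝ) → Measure (MShift (fun a b => 0 < P a b)),
      (∀ h : S → ℝ, (∀ a, 0 < h a) → (∀ a, HasSum (fun b => P a b * h b) (h a)) →
        (∀ (n : ℕ) (w : Fin (n + 1) → S),
          Φ h {x : MShift (fun a b => 0 < P a b) | ∀ i : Fin (n + 1), x.1 i = w i}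
            = ENNReal.ofReal
                ((∏ i : Fin n, P (w i.castSucc) (w i.succ)) * h (w (Fin.last n)))) ∧
        (∀ K : Set (MShift (fun a b => 0 < P a b)), IsCompact K → Φ h K ≠ ⊤) ∧
        (∀ f : MShift (fun a b => 0 < P a b) → ℝ≥0∞, Measurable f →
          ∫⁻ x, Ruelle (fun a b => 0 < P a b)
              (fun x => Real.log (P (x.1 0) (x.1 1))) f x ∂(Φ h)
            = ∫⁻ x, f x ∂(Φ h))) ∧
      (∀ h₁ h₂ : S → ℝ, (∀ a, 0 < h₁ a) → (∀ a, HasSum (fun b => P a b * h₁ b) (h₁ a)) →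
        (∀ a, 0 < h₂ a) → (∀ a, HasSum (fun b => P a b * h₂ b) (h₂ a)) →
        Φ (h₁ + h₂) = Φ h₁ + Φ h₂) ∧
      (∀ (h : S → ℝ) (c : ℝ), (∀ a, 0 < h a) →
        (∀ a, HasSum (fun b => P a b * h b) (h a)) → 0 < c →
        Φ (c • h) = ENNReal.ofReal c • Φ h) ∧
      (∀ h₁ h₂ : S → ℝ, (∀ a, 0 < h₁ a) → (∀ a, HasSum (fun b => P a b * h₁ b) (h₁ a)) →
        (∀ a, 0 < h₂ a) → (∀ a, HasSum (fun b => P a b * h₂ b) (h₂ a)) →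
        Φ h₁ = Φ h₂ → h₁ = h₂) := by
  
  classical
  refine ⟨fun h => if H : (∀ a, 0 < h a) ∧ (∀ a, HasSum (fun b => P a b * h b) (h a))
    then muH P h hPnn (fun a => (H.1 a).le) H.2 else 0, ?_, ?_, ?_, ?_⟩
  · intro h hpos hharm
    have H : (∀ a, 0 < h a) ∧ (∀ a, HasSum (fun b => P a b * h b) (h a)) := ⟨hpos, hharm⟩
    have hh0 : ∀ a, 0 ≤ h a := fun a => (hpos a).le
    refine ⟨?_, ?_, ?_⟩
    · intro n w
      beta_reduce
      rw [dif_pos H]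
      have hset : {x : MShift (fun a b : S => 0 < P a b) | ∀ i : Fin (n + 1), x.1 i = w i}
          = cyl P n (fun j => w ⟨min j n, by omega⟩) := by
        ext x
        constructor
        · intro hx i hi
          show x.1 i = w ⟨min i n, by omega⟩
          have h1 := hx ⟨i, by omega⟩
          rw [h1]
          refine congrArg w (Fin.ext ?_)
          show i = min i n
          rw [min_eq_left hi]
        · intro hx i
          have h1 := hx i.1 (by omega)
          rw [h1]
          show w ⟨min i.1 n, by omega⟩ = w i
          refine congrArg w (Fin.ext ?_)
          show min i.1 n = i.1
          exact min_eq_left (by omega)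
      rw [hset, muH_cyl hPnn hh0 hharm hstoch hlocF n _]
      unfold wt
      congr 1
      have hprod : (∏ i ∈ Finset.range n, P ((fun j => w ⟨min j n, by omega⟩) i)
            ((fun j => w ⟨min j n, by omega⟩) (i + 1)))
          = ∏ i : Fin n, P (w i.castSucc) (w i.succ) := by
        rw [← Fin.prod_univ_eq_prod_range
          (fun j => P (w ⟨min j n, by omega⟩) (w ⟨min (j+1) n, by omega⟩)) n]
        refine Finset.prod_congr rfl fun i _ => ?_
        congr 1
        · refine congrArg w (Fin.ext ?_)
          show min i.1 n = i.1
          exact min_eq_left (le_of_lt i.2)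
        · refine congrArg w (Fin.ext ?_)
          show min (i.1 + 1) n = i.1 + 1
          exact min_eq_left (by omega)
      rw [hprod]
      congr 1
      refine congrArg h (congrArg w (Fin.ext ?_))
      show min n n = n
      exact min_self n
    · intro K hK
      beta_reduce
      rw [dif_pos H]
      have hcov : K ⊆ ⋃ a : S, cyl P 0 (fun _ => a) :=
        fun x _ => Set.mem_iUnion.mpr ⟨x.1 0, mem_cyl0.mpr rfl⟩
      obtain ⟨t, ht⟩ := hK.elim_finite_subcover (fun a : S => cyl P 0 (fun _ => a))
        (fun a => isOpen_cyl 0 _) hcov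
      refine ne_of_lt (lt_of_le_of_lt (measure_mono ht) ?_)
      refine lt_of_le_of_lt (measure_biUnion_finset_le t _) ?_
      refine ENNReal.sum_lt_top.mpr fun a _ => ?_
      rw [muH_cyl0 hPnn hh0 hharm hstoch hlocF a]
      exact ENNReal.ofReal_lt_top
    · intro f hf
      beta_reduce
      rw [dif_pos H]
      exact conformal hPnn hh0 hharm hstoch hlocF f hf
  · intro h₁ h₂ hp1 hh1 hp2 hh2
    have hp12 : ∀ a, 0 < (h₁ + h₂) a := fun a => add_pos (hp1 a) (hp2 a)
    have hh12 : ∀ a, HasSum (fun b => P a b * (h₁ + h₂) b) ((h₁ + h₂) a) := by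
      intro a
      have := (hh1 a).add (hh2 a)
      simpa [mul_add] using this
    beta_reduce
    rw [dif_pos ⟨hp12, hh12⟩, dif_pos ⟨hp1, hh1⟩, dif_pos ⟨hp2, hh2⟩]
    refine measure_ext_cyl (fun a => ?_) (fun n w => ?_)
    · rw [muH_cyl0 hPnn (fun a => (hp12 a).le) hh12 hstoch hlocF a]
      exact ENNReal.ofReal_ne_top
    · rw [muH_cyl hPnn (fun a => (hp12 a).le) hh12 hstoch hlocF n w, Measure.add_apply,
        muH_cyl hPnn (fun a => (hp1 a).le) hh1 hstoch hlocF n w,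
        muH_cyl hPnn (fun a => (hp2 a).le) hh2 hstoch hlocF n w]
      unfold wt
      have hC : (0:ℝ) ≤ ∏ i ∈ Finset.range n, P (w i) (w (i + 1)) :=
        Finset.prod_nonneg fun i _ => hPnn _ _
      rw [Pi.add_apply, mul_add,
        ENNReal.ofReal_add (mul_nonneg hC (hp1 _).le) (mul_nonneg hC (hp2 _).le)]
  · intro h c hpos hharm hc
    have hpc : ∀ a, 0 < (c • h) a := fun a => by
      simpa [smul_eq_mul] using mul_pos hc (hpos a)
    have hhc : ∀ a, HasSum (fun b => P a b * (c • h) b) ((c • h) a) := by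
      intro a
      have := (hharm a).mul_left c
      simpa [smul_eq_mul, mul_left_comm] using this
    beta_reduce
    rw [dif_pos ⟨hpc, hhc⟩, dif_pos ⟨hpos, hharm⟩]
    refine measure_ext_cyl (fun a => ?_) (fun n w => ?_)
    · rw [muH_cyl0 hPnn (fun a => (hpc a).le) hhc hstoch hlocF a]
      exact ENNReal.ofReal_ne_top
    · rw [muH_cyl hPnn (fun a => (hpc a).le) hhc hstoch hlocF n w, Measure.smul_apply,
        muH_cyl hPnn (fun a => (hpos a).le) hharm hstoch hlocF n w, smul_eq_mul]
      unfold wt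
      rw [← ENNReal.ofReal_mul hc.le]
      congr 1
      show (∏ i ∈ Finset.range n, P (w i) (w (i + 1))) * (c • h) (w n)
        = c * ((∏ i ∈ Finset.range n, P (w i) (w (i + 1))) * h (w n))
      simp only [Pi.smul_apply, smul_eq_mul]
      ring
  · intro h₁ h₂ hp1 hh1 hp2 hh2 heq
    simp only [dif_pos (⟨hp1, hh1⟩ : _ ∧ _), dif_pos (⟨hp2, hh2⟩ : _ ∧ _)] at heq
    funext a
    have hval := congrArg (fun μ : Measure (MShift (fun a b : S => 0 < P a b)) =>
      μ (cyl P 0 (fun _ => a))) heq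
    rw [muH_cyl0 hPnn (fun a => (hp1 a).le) hh1 hstoch hlocF a,
      muH_cyl0 hPnn (fun a => (hp2 a).le) hh2 hstoch hlocF a] at hval
    exact (ENNReal.ofReal_eq_ofReal_iff (hp1 a).le (hp2 a).le).mp hval
end

section
/- Let (X⁺, T) be a transitive locally compact one-sided countable Markov shift with infinite alphabet and φ a λ-transient potential with summable variations. The Martin compactification (X̂⁺, ρ) (the completion of X⁺ under the Martin metric ρ) is compact, and the Martin boundary M = X̂⁺ \ X⁺ is closed and non-empty; moreover, if a sequence xₙ ∈ X⁺ ρ-converges to a boundary point, then xₙ eventually leaves every compact subset of (X⁺, d). -/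
open MeasureTheory ENNReal Filter Topology

variable {S : Type*}

/-- The Green's function `G(f, x | λ) = Σ_n λ⁻ⁿ (L_φⁿ f)(x)`. -/
noncomputable def Green (Adj : S → S → Prop) (φ : MShift Adj → ℝ) (lam : ℝ)
    (f : MShift Adj → ℝ≥0∞) (x : MShift Adj) : ℝ≥0∞ :=
  ∑' n : ℕ, ENNReal.ofReal ((lam ^ n)⁻¹) * ((Ruelle Adj φ)^[n] f) x

/-- The cylinder set `[a] = {x : x₀ = a}`. -/
def cylA (Adj : S → S → Prop) (a : S) : Set (MShift Adj) := {x | x.1 0 = a}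

/-- Indicator function of the cylinder `[a]`. -/
noncomputable def cylInd (Adj : S → S → Prop) (a : S) : MShift Adj → ℝ≥0∞ :=
  (cylA Adj a).indicator 1

/-- Local compactness: each state has finitely many followers. -/
def LocFin (Adj : S → S → Prop) : Prop := ∀ a : S, {b : S | Adj a b}.Finite

/-- Set of values `|φ(x) − φ(y)|` over pairs agreeing in their first `m` coordinates. -/
def varSet (Adj : S → S → Prop) (φ : MShift Adj → ℝ) (m : ℕ) : Set ℝ :=
  {r | ∃ x y : MShift Adj, (∀ i < m, x.1 i = y.1 i) ∧ r = |φ x - φ y|}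

/-- The `m`-th variation of `φ`. -/
noncomputable def Var (Adj : S → S → Prop) (φ : MShift Adj → ℝ) (m : ℕ) : ℝ :=
  sSup (varSet Adj φ m)

/-- `φ` has summable variations. -/
def SummableVar (Adj : S → S → Prop) (φ : MShift Adj → ℝ) : Prop :=
  (∀ m, BddAbove (varSet Adj φ m)) ∧ Summable (Var Adj φ)

/-- A non-negative real function viewed as `ℝ≥0∞`-valued. -/
noncomputable def ofR {Adj : S → S → Prop} (f : MShift Adj → ℝ) : MShift Adj → ℝ≥0∞ :=
  fun x => ENNReal.ofReal (f x)

/-- `λ`-transience: the Green's function of every cylinder is finite everywhere. -/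
def Transient (Adj : S → S → Prop) (φ : MShift Adj → ℝ) (lam : ℝ) : Prop :=
  ∀ (a : S) (x : MShift Adj), Green Adj φ lam (cylInd Adj a) x ≠ ⊤

/-- The cylinder set of a (non-empty) word. -/
def cylSigma (Adj : S → S → Prop) (w : (m : ℕ) × (Fin (m + 1) → S)) :
    Set (MShift Adj) :=
  {x | ∀ i : Fin (w.1 + 1), x.1 i = w.2 i}

/-- Real-valued Martin kernel of a set `B`, with origin cylinder `[o]`. -/
noncomputable def MartinKr (Adj : S → S → Prop) (φ : MShift Adj → ℝ) (lam : ℝ) (o : S)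
    (B : Set (MShift Adj)) (x : MShift Adj) : ℝ :=
  (Green Adj φ lam (B.indicator 1) x / Green Adj φ lam (cylInd Adj o) x).toReal

/-- The Martin (pseudo-)metric associated to an enumeration `e` of words and bounds `C`. -/
noncomputable def martinRho (Adj : S → S → Prop) (φ : MShift Adj → ℝ) (lam : ℝ) (o : S)
    (e : ℕ → (m : ℕ) × (Fin (m + 1) → S)) (C : ℕ → ℝ) (x y : MShift Adj) : ℝ :=
  ∑' i : ℕ, ((2 : ℝ) ^ i * (C i + 1))⁻¹ *
    (|MartinKr Adj φ lam o (cylSigma Adj (e i)) x -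
        MartinKr Adj φ lam o (cylSigma Adj (e i)) y| +
      |Set.indicator (cylSigma Adj (e i)) (fun _ => (1 : ℝ)) x -
        Set.indicator (cylSigma Adj (e i)) (fun _ => (1 : ℝ)) y|)


/-- A sequence is Cauchy for the Martin metric. -/
def RhoCauchy (Adj : S → S → Prop) (φ : MShift Adj → ℝ) (lam : ℝ) (o : S)
    (e : ℕ → (m : ℕ) × (Fin (m + 1) → S)) (C : ℕ → ℝ) (u : ℕ → MShift Adj) : Prop :=
  ∀ ε > (0 : ℝ), ∃ N : ℕ, ∀ m ≥ N, ∀ n ≥ N,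
    martinRho Adj φ lam o e C (u m) (u n) < ε

/-- A sequence `ρ`-converges to a point of `X⁺`. -/
def RhoTendsto (Adj : S → S → Prop) (φ : MShift Adj → ℝ) (lam : ℝ) (o : S)
    (e : ℕ → (m : ℕ) × (Fin (m + 1) → S)) (C : ℕ → ℝ) (u : ℕ → MShift Adj)
    (x : MShift Adj) : Prop :=
  Filter.Tendsto (fun n => martinRho Adj φ lam o e C (u n) x) Filter.atTop (nhds 0)

/-! ### Auxiliary machinery -/

section Aux

variable {S : Type*} {Adj : S → S → Prop} {φ : MShift Adj → ℝ} {lam : ℝ} {o : S}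

/-- Agreement on the first `k` coordinates. -/
def Agr (k : ℕ) (x y : MShift Adj) : Prop := ∀ i < k, x.1 i = y.1 i

lemma Agr.symm2 {k} {x y : MShift Adj} (h : Agr k x y) : Agr k y x :=
  fun i hi => (h i hi).symm

lemma Agr.mono2 {k k'} (hk : k ≤ k') {x y : MShift Adj} (h : Agr k' x y) : Agr k x y :=
  fun i hi => h i (lt_of_lt_of_le hi hk)

/-- Prepend a symbol to a point. -/
def prep (s0 : S) (x : MShift Adj) (h : Adj s0 (x.1 0)) : MShift Adj :=
  ⟨fun i => Nat.rec s0 (fun j _ => x.1 j) i, by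
    intro i
    cases i with
    | zero => exact h
    | succ j => exact x.2 j⟩

@[simp] lemma prep_zero (s0 : S) (x : MShift Adj) (h) : (prep s0 x h).1 0 = s0 := rfl
@[simp] lemma prep_succ (s0 : S) (x : MShift Adj) (h) (i : ℕ) :
    (prep s0 x h).1 (i + 1) = x.1 i := rfl

lemma shift_prep (s0 : S) (x : MShift Adj) (h) : shiftMap Adj (prep s0 x h) = x := by
  apply Subtype.ext; funext i; rfl

lemma pre_coord {z x : MShift Adj} (hz : shiftMap Adj z = x) (i : ℕ) : z.1 (i + 1) = x.1 i :=
  congrFun (congrArg Subtype.val hz) i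

/-- Bijection between `shiftMap`-fibers over points with the same first symbol. -/
def preEquiv (x y : MShift Adj) (h0 : x.1 0 = y.1 0) :
    {z : MShift Adj // shiftMap Adj z = x} ≃ {z : MShift Adj // shiftMap Adj z = y} where
  toFun z := ⟨prep (z.1.1 0) y (by
      have h1 : Adj (z.1.1 0) (z.1.1 1) := z.1.2 0
      rwa [pre_coord z.2 0, h0] at h1), shift_prep _ _ _⟩
  invFun z := ⟨prep (z.1.1 0) x (by
      have h1 : Adj (z.1.1 0) (z.1.1 1) := z.1.2 0
      rwa [pre_coord z.2 0, ← h0] at h1), shift_prep _ _ _⟩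
  left_inv z := by
    apply Subtype.ext; apply Subtype.ext; funext i
    cases i with
    | zero => rfl
    | succ j => exact (pre_coord z.2 j).symm
  right_inv z := by
    apply Subtype.ext; apply Subtype.ext; funext i
    cases i with
    | zero => rfl
    | succ j => exact (pre_coord z.2 j).symm

lemma preEquiv_agree {x y : MShift Adj} (h0 : x.1 0 = y.1 0) {k : ℕ} (hxy : Agr k x y)
    (z : {z : MShift Adj // shiftMap Adj z = x}) :
    Agr (k + 1) z.1 ((preEquiv x y h0 z).1) := by
  intro i hi
  cases i with
  | zero => rfl
  | succ j =>
    exact (pre_coord z.2 j).trans (hxy j (by omega))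

lemma shift_iter (x : MShift Adj) : ∀ (n : ℕ) (i : ℕ), ((shiftMap Adj)^[n] x).1 i = x.1 (i + n)
  | 0, i => rfl
  | (n+1), i => by
    rw [Function.iterate_succ_apply, shift_iter (shiftMap Adj x) n i]
    rfl

/-! ### Variations -/

lemma var_nonneg (x0 : MShift Adj) (hb : ∀ m, BddAbove (varSet Adj φ m)) (m : ℕ) :
    0 ≤ Var Adj φ m :=
  le_csSup (hb m) ⟨x0, x0, fun _ _ => rfl, by simp⟩

lemma abs_sub_le_var (hb : ∀ m, BddAbove (varSet Adj φ m)) {m} {x y : MShift Adj}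
    (h : Agr m x y) : |φ x - φ y| ≤ Var Adj φ m :=
  le_csSup (hb m) ⟨x, y, h, rfl⟩

/-- Tail sum of variations beyond `k`. -/
noncomputable def Vt (Adj : S → S → Prop) (φ : MShift Adj → ℝ) (k : ℕ) : ℝ :=
  ∑' j, Var Adj φ (k + 1 + j)

lemma summable_var_shift (h : Summable (Var Adj φ)) (k : ℕ) :
    Summable fun j => Var Adj φ (k + j) :=
  ((summable_nat_add_iff k).2 h).congr fun n => by rw [Nat.add_comm]

lemma Vt_rec (h : Summable (Var Adj φ)) (k : ℕ) :
    Vt Adj φ k = Var Adj φ (k + 1) + Vt Adj φ (k + 1) := by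
  have hs : Summable fun j => Var Adj φ (k + 1 + j) := summable_var_shift h (k + 1)
  have h2 : ∑' j, Var Adj φ (k + 1 + (j + 1)) = Vt Adj φ (k + 1) := by
    rw [Vt]; apply tsum_congr; intro j; congr 1; omega
  rw [Vt, Summable.tsum_eq_zero_add hs, h2]

lemma Vt_nonneg (x0 : MShift Adj) (hb : ∀ m, BddAbove (varSet Adj φ m)) (k : ℕ) :
    0 ≤ Vt Adj φ k :=
  tsum_nonneg fun j => var_nonneg x0 hb _

lemma Vt_tendsto (h : Summable (Var Adj φ)) : Tendsto (Vt Adj φ) atTop (𝓝 0) := by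
  have h1 := tendsto_sum_nat_add (Var Adj φ)
  have h2 : Vt Adj φ = (fun i => ∑' j, Var Adj φ (j + i)) ∘ (fun k => k + 1) := by
    funext k
    simp only [Vt, Function.comp]
    apply tsum_congr; intro j; congr 1; omega
  rw [h2]
  exact h1.comp (tendsto_add_atTop_nat 1)

end Aux

section Aux2

variable {S : Type*} {Adj : S → S → Prop} {φ : MShift Adj → ℝ} {lam : ℝ} {o : S}

lemma ruelle_iter_mono {f g : MShift Adj → ℝ≥0∞} (h : ∀ x, f x ≤ g x) :
    ∀ (n : ℕ) (x : MShift Adj), (Ruelle Adj φ)^[n] f x ≤ (Ruelle Adj φ)^[n] g x := by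
  intro n
  induction n with
  | zero => exact h
  | succ n ih =>
    intro x
    rw [Function.iterate_succ_apply', Function.iterate_succ_apply']
    exact ENNReal.tsum_le_tsum fun z => mul_le_mul_right (ih z.1) _

lemma green_mono {f g : MShift Adj → ℝ≥0∞} (h : ∀ x, f x ≤ g x) (x : MShift Adj) :
    Green Adj φ lam f x ≤ Green Adj φ lam g x :=
  ENNReal.tsum_le_tsum fun n => mul_le_mul_right (ruelle_iter_mono h n x) _

/-- The key comparison estimate for iterates of the Ruelle operator. -/
lemma ruelle_iter_comp (hb : ∀ m, BddAbove (varSet Adj φ m)) (hsum : Summable (Var Adj φ))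
    (x0 : MShift Adj) (f : MShift Adj → ℝ≥0∞) (L : ℕ)
    (hf : ∀ x y : MShift Adj, Agr L x y → f x = f y) :
    ∀ (n k : ℕ), 1 ≤ k → L ≤ k → ∀ x y : MShift Adj, Agr k x y →
      (Ruelle Adj φ)^[n] f x ≤
        ENNReal.ofReal (Real.exp (Vt Adj φ k)) * (Ruelle Adj φ)^[n] f y := by
  intro n
  induction n with
  | zero =>
    intro k _ hkL x y hxy
    simp only [Function.iterate_zero, id_eq]
    rw [hf x y (hxy.mono2 hkL)]
    refine le_mul_of_one_le_left zero_le ?_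
    rw [show (1 : ℝ≥0∞) = ENNReal.ofReal 1 from by simp]
    exact ENNReal.ofReal_le_ofReal (Real.one_le_exp (Vt_nonneg x0 hb k))
  | succ n ih =>
    intro k hk1 hkL x y hxy
    have h0 : x.1 0 = y.1 0 := hxy 0 hk1
    rw [Function.iterate_succ_apply']
    show Ruelle Adj φ _ x ≤ _ * Ruelle Adj φ _ y
    rw [Ruelle, Ruelle,
      ← Equiv.tsum_eq (preEquiv x y h0)
        (fun z => ENNReal.ofReal (Real.exp (φ z.1)) * (Ruelle Adj φ)^[n] f z.1),
      ← ENNReal.tsum_mul_left]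
    refine ENNReal.tsum_le_tsum fun z => ?_
    set z' := preEquiv x y h0 z with hz'
    have hag : Agr (k + 1) z.1 z'.1 := preEquiv_agree h0 hxy z
    have hφ : φ z.1 ≤ Var Adj φ (k + 1) + φ z'.1 := by
      have := abs_sub_le_var hb hag
      have h2 := (abs_le.1 this).2
      linarith
    have hL : (Ruelle Adj φ)^[n] f z.1 ≤
        ENNReal.ofReal (Real.exp (Vt Adj φ (k + 1))) * (Ruelle Adj φ)^[n] f z'.1 :=
      ih (k + 1) (by omega) (by omega) z.1 z'.1 hag
    calc ENNReal.ofReal (Real.exp (φ z.1)) * (Ruelle Adj φ)^[n] f z.1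
        ≤ ENNReal.ofReal (Real.exp (Var Adj φ (k + 1) + φ z'.1)) *
            (ENNReal.ofReal (Real.exp (Vt Adj φ (k + 1))) * (Ruelle Adj φ)^[n] f z'.1) :=
          mul_le_mul (ENNReal.ofReal_le_ofReal (Real.exp_le_exp.2 hφ)) hL zero_le zero_le
      _ = ENNReal.ofReal (Real.exp (Vt Adj φ k)) *
            (ENNReal.ofReal (Real.exp (φ z'.1)) * (Ruelle Adj φ)^[n] f z'.1) := by
          rw [Vt_rec hsum k, Real.exp_add, Real.exp_add,
            ENNReal.ofReal_mul (Real.exp_nonneg _), ENNReal.ofReal_mul (Real.exp_nonneg _)]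
          ring

lemma green_comp (hb : ∀ m, BddAbove (varSet Adj φ m)) (hsum : Summable (Var Adj φ))
    (x0 : MShift Adj) (f : MShift Adj → ℝ≥0∞) (L : ℕ)
    (hf : ∀ x y : MShift Adj, Agr L x y → f x = f y)
    (k : ℕ) (hk1 : 1 ≤ k) (hkL : L ≤ k) {x y : MShift Adj} (hxy : Agr k x y) :
    Green Adj φ lam f x ≤ ENNReal.ofReal (Real.exp (Vt Adj φ k)) * Green Adj φ lam f y := by
  rw [Green, Green, ← ENNReal.tsum_mul_left]
  refine ENNReal.tsum_le_tsum fun n => ?_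
  calc ENNReal.ofReal ((lam ^ n)⁻¹) * (Ruelle Adj φ)^[n] f x
      ≤ ENNReal.ofReal ((lam ^ n)⁻¹) *
          (ENNReal.ofReal (Real.exp (Vt Adj φ k)) * (Ruelle Adj φ)^[n] f y) :=
        mul_le_mul_right (ruelle_iter_comp hb hsum x0 f L hf n k hk1 hkL x y hxy) _
    _ = ENNReal.ofReal (Real.exp (Vt Adj φ k)) *
          (ENNReal.ofReal ((lam ^ n)⁻¹) * (Ruelle Adj φ)^[n] f y) := by ring

lemma ruelle_pos : ∀ (n : ℕ) (x w : MShift Adj), w.1 0 = o → w.1 n = x.1 0 →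
    (Ruelle Adj φ)^[n] (cylInd Adj o) x ≠ 0 := by
  intro n
  induction n with
  | zero =>
    intro x w h0 hn
    have hx : x ∈ cylA Adj o := hn.symm.trans h0
    simp only [Function.iterate_zero, id_eq, cylInd]
    rw [Set.indicator_of_mem hx]
    simp
  | succ n ih =>
    intro x w h0 hn
    have hadj : Adj (w.1 n) (x.1 0) := by have h := w.2 n; rwa [hn] at h
    set z : MShift Adj := prep (w.1 n) x hadj with hzdef
    have hz : shiftMap Adj z = x := shift_prep _ _ _
    have hterm : ENNReal.ofReal (Real.exp (φ z)) * (Ruelle Adj φ)^[n] (cylInd Adj o) z ≠ 0 := by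
      apply mul_ne_zero
      · simp [Real.exp_pos, ENNReal.ofReal_pos, ne_of_gt]
      · exact ih z w h0 rfl
    rw [Function.iterate_succ_apply']
    show Ruelle Adj φ _ x ≠ 0
    rw [Ruelle]
    intro hzero
    have hle : ENNReal.ofReal (Real.exp (φ z)) * (Ruelle Adj φ)^[n] (cylInd Adj o) z ≤ 0 := by
      rw [← hzero]
      exact ENNReal.le_tsum (⟨z, hz⟩ : {y : MShift Adj // shiftMap Adj y = x})
    exact hterm (le_antisymm hle zero_le)

lemma green_pos (htrans : TransitiveShift Adj) (hlam : 0 < lam) (x : MShift Adj) :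
    Green Adj φ lam (cylInd Adj o) x ≠ 0 := by
  obtain ⟨n, w, hw0, hwn⟩ := htrans o (x.1 0)
  rw [shift_iter w n 0] at hwn
  have h1 : (Ruelle Adj φ)^[n] (cylInd Adj o) x ≠ 0 := ruelle_pos n x w hw0 (Nat.zero_add n ▸ hwn)
  rw [Green]
  intro h0
  have hle : ENNReal.ofReal ((lam ^ n)⁻¹) * (Ruelle Adj φ)^[n] (cylInd Adj o) x ≤ 0 := by
    rw [← h0]; exact ENNReal.le_tsum n
  have := le_antisymm hle zero_le
  rcases mul_eq_zero.1 this with h | h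
  · rw [ENNReal.ofReal_eq_zero] at h
    have : (0:ℝ) < (lam ^ n)⁻¹ := by positivity
    linarith
  · exact h1 h

lemma cylSigma_subset (w : (m : ℕ) × (Fin (m + 1) → S)) :
    cylSigma Adj w ⊆ cylA Adj (w.2 0) := fun z hz => hz 0

lemma green_cyl_ne_top (htransient : Transient Adj φ lam)
    (w : (m : ℕ) × (Fin (m + 1) → S)) (x : MShift Adj) :
    Green Adj φ lam ((cylSigma Adj w).indicator 1) x ≠ ⊤ := by
  refine ne_top_of_le_ne_top (htransient (w.2 0) x) (green_mono (fun z => ?_) x)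
  rw [cylInd]
  exact Set.indicator_le_indicator_of_subset (cylSigma_subset w) (fun _ => zero_le) z

/-- Locality of cylinder indicators. -/
lemma cylSigma_local (w : (m : ℕ) × (Fin (m + 1) → S)) {x y : MShift Adj}
    (h : Agr (w.1 + 1) x y) :
    (cylSigma Adj w).indicator (1 : MShift Adj → ℝ≥0∞) x
      = (cylSigma Adj w).indicator 1 y := by
  have hmem : x ∈ cylSigma Adj w ↔ y ∈ cylSigma Adj w := by
    constructor
    · intro hx i; rw [← h i i.isLt]; exact hx i
    · intro hy i; rw [h i i.isLt]; exact hy i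
  by_cases hx : x ∈ cylSigma Adj w
  · rw [Set.indicator_of_mem hx, Set.indicator_of_mem (hmem.1 hx)]; rfl
  · rw [Set.indicator_of_notMem hx, Set.indicator_of_notMem (fun hy => hx (hmem.2 hy))]

lemma cylSigma_localR (w : (m : ℕ) × (Fin (m + 1) → S)) {x y : MShift Adj}
    (h : Agr (w.1 + 1) x y) :
    (cylSigma Adj w).indicator (fun _ => (1:ℝ)) x
      = (cylSigma Adj w).indicator (fun _ => (1:ℝ)) y := by
  have hmem : x ∈ cylSigma Adj w ↔ y ∈ cylSigma Adj w := by
    constructor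
    · intro hx i; rw [← h i i.isLt]; exact hx i
    · intro hy i; rw [h i i.isLt]; exact hy i
  by_cases hx : x ∈ cylSigma Adj w
  · rw [Set.indicator_of_mem hx, Set.indicator_of_mem (hmem.1 hx)]
  · rw [Set.indicator_of_notMem hx, Set.indicator_of_notMem (fun hy => hx (hmem.2 hy))]

lemma cylInd_local {x y : MShift Adj} (h : Agr 1 x y) :
    cylInd Adj o x = cylInd Adj o y := by
  have h0 : x.1 0 = y.1 0 := h 0 one_pos
  rw [cylInd]
  have hmem : x ∈ cylA Adj o ↔ y ∈ cylA Adj o := by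
    simp only [cylA, Set.mem_setOf_eq, h0]
  by_cases hx : x ∈ cylA Adj o
  · rw [Set.indicator_of_mem hx, Set.indicator_of_mem (hmem.1 hx)]; rfl
  · rw [Set.indicator_of_notMem hx, Set.indicator_of_notMem (fun hy => hx (hmem.2 hy))]

end Aux2

section Aux3

variable {S : Type*} {Adj : S → S → Prop} {φ : MShift Adj → ℝ} {lam : ℝ} {o : S}

lemma martinKr_nonneg (B : Set (MShift Adj)) (x : MShift Adj) :
    0 ≤ MartinKr Adj φ lam o B x := ENNReal.toReal_nonneg

/-- Key estimate: the Martin kernel of a word-cylinder varies little on points that agree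
on many initial coordinates. -/
lemma K_diff (hb : ∀ m, BddAbove (varSet Adj φ m)) (hsum : Summable (Var Adj φ))
    (htrans : TransitiveShift Adj) (hlam : 0 < lam) (htransient : Transient Adj φ lam)
    (w : (m : ℕ) × (Fin (m + 1) → S)) (cw : ℝ)
    (hcw : ∀ z, MartinKr Adj φ lam o (cylSigma Adj w) z ≤ cw)
    (k : ℕ) (hk1 : 1 ≤ k) (hkL : w.1 + 1 ≤ k) {x y : MShift Adj} (hxy : Agr k x y) :
    |MartinKr Adj φ lam o (cylSigma Adj w) x - MartinKr Adj φ lam o (cylSigma Adj w) y| ≤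
      (Real.exp (2 * Vt Adj φ k) - 1) * cw := by
  set E := Real.exp (Vt Adj φ k) with hE
  have hE0 : 0 ≤ E := Real.exp_nonneg _
  have hE1 : 1 ≤ E := Real.one_le_exp (Vt_nonneg x hb k)
  have hE2 : Real.exp (2 * Vt Adj φ k) = E * E := by
    rw [hE, ← Real.exp_add]; ring_nf
  set fB : MShift Adj → ℝ≥0∞ := (cylSigma Adj w).indicator 1 with hfB
  set fo : MShift Adj → ℝ≥0∞ := cylInd Adj o with hfo
  have hfBloc : ∀ x y : MShift Adj, Agr (w.1 + 1) x y → fB x = fB y :=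
    fun _ _ h => cylSigma_local w h
  have hfoloc : ∀ x y : MShift Adj, Agr 1 x y → fo x = fo y :=
    fun _ _ h => cylInd_local h
  -- ENNReal comparisons
  have hBxy : Green Adj φ lam fB x ≤ ENNReal.ofReal E * Green Adj φ lam fB y :=
    green_comp hb hsum x fB (w.1 + 1) hfBloc k hk1 hkL hxy
  have hByx : Green Adj φ lam fB y ≤ ENNReal.ofReal E * Green Adj φ lam fB x :=
    green_comp hb hsum x fB (w.1 + 1) hfBloc k hk1 hkL hxy.symm2
  have hOxy : Green Adj φ lam fo x ≤ ENNReal.ofReal E * Green Adj φ lam fo y :=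
    green_comp hb hsum x fo 1 hfoloc k hk1 hk1 hxy
  have hOyx : Green Adj φ lam fo y ≤ ENNReal.ofReal E * Green Adj φ lam fo x :=
    green_comp hb hsum x fo 1 hfoloc k hk1 hk1 hxy.symm2
  -- finiteness and positivity
  have hBxt : Green Adj φ lam fB x ≠ ⊤ := green_cyl_ne_top htransient w x
  have hByt : Green Adj φ lam fB y ≠ ⊤ := green_cyl_ne_top htransient w y
  have hOxt : Green Adj φ lam fo x ≠ ⊤ := htransient o x
  have hOyt : Green Adj φ lam fo y ≠ ⊤ := htransient o y
  have hOx0 : Green Adj φ lam fo x ≠ 0 := green_pos htrans hlam x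
  have hOy0 : Green Adj φ lam fo y ≠ 0 := green_pos htrans hlam y
  -- real versions
  set Bx := (Green Adj φ lam fB x).toReal
  set By := (Green Adj φ lam fB y).toReal
  set Ox := (Green Adj φ lam fo x).toReal
  set Oy := (Green Adj φ lam fo y).toReal
  have hOxpos : 0 < Ox := ENNReal.toReal_pos hOx0 hOxt
  have hOypos : 0 < Oy := ENNReal.toReal_pos hOy0 hOyt
  have hBxnn : 0 ≤ Bx := ENNReal.toReal_nonneg
  have hBynn : 0 ≤ By := ENNReal.toReal_nonneg
  have toR : ∀ (a b : ℝ≥0∞), a ≠ ⊤ → b ≠ ⊤ → a ≤ ENNReal.ofReal E * b →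
      a.toReal ≤ E * b.toReal := by
    intro a b hat hbt hab
    have := ENNReal.toReal_mono (by
        exact ENNReal.mul_ne_top ENNReal.ofReal_ne_top hbt) hab
    rwa [ENNReal.toReal_mul, ENNReal.toReal_ofReal hE0] at this
  have h1 : Bx ≤ E * By := toR _ _ hBxt hByt hBxy
  have h1' : By ≤ E * Bx := toR _ _ hByt hBxt hByx
  have h2 : Ox ≤ E * Oy := toR _ _ hOxt hOyt hOxy
  have h2' : Oy ≤ E * Ox := toR _ _ hOyt hOxt hOyx
  have hKx : MartinKr Adj φ lam o (cylSigma Adj w) x = Bx / Ox := by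
    rw [MartinKr, ENNReal.toReal_div]
  have hKy : MartinKr Adj φ lam o (cylSigma Adj w) y = By / Oy := by
    rw [MartinKr, ENNReal.toReal_div]
  have hKxle : Bx / Ox ≤ (E * E) * (By / Oy) := by
    rw [mul_div_assoc' (E * E) By Oy, div_le_div_iff₀ hOxpos hOypos]
    nlinarith
  have hKyle : By / Oy ≤ (E * E) * (Bx / Ox) := by
    rw [mul_div_assoc' (E * E) Bx Ox, div_le_div_iff₀ hOypos hOxpos]
    nlinarith
  have hKynn : 0 ≤ By / Oy := div_nonneg hBynn hOypos.le
  have hKxnn : 0 ≤ Bx / Ox := div_nonneg hBxnn hOxpos.le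
  have hKycw : By / Oy ≤ cw := hKy ▸ hcw y
  have hKxcw : Bx / Ox ≤ cw := hKx ▸ hcw x
  have hEE1 : 1 ≤ E * E := by nlinarith
  have key1 : (E * E - 1) * (By / Oy) ≤ (E * E - 1) * cw :=
    mul_le_mul_of_nonneg_left hKycw (by linarith)
  have key2 : (E * E - 1) * (Bx / Ox) ≤ (E * E - 1) * cw :=
    mul_le_mul_of_nonneg_left hKxcw (by linarith)
  rw [hKx, hKy, hE2, abs_sub_le_iff]
  constructor
  · nlinarith
  · nlinarith

/-- Continuity of the Martin kernel in the cylinder topology. -/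
lemma K_cont (hb : ∀ m, BddAbove (varSet Adj φ m)) (hsum : Summable (Var Adj φ))
    (htrans : TransitiveShift Adj) (hlam : 0 < lam) (htransient : Transient Adj φ lam)
    (w : (m : ℕ) × (Fin (m + 1) → S)) (cw : ℝ)
    (hcw : ∀ z, MartinKr Adj φ lam o (cylSigma Adj w) z ≤ cw)
    {δ : ℝ} (hδ : 0 < δ) :
    ∃ k : ℕ, ∀ x y : MShift Adj, Agr k x y →
      |MartinKr Adj φ lam o (cylSigma Adj w) x - MartinKr Adj φ lam o (cylSigma Adj w) y| < δ := by
  have h1 : Tendsto (fun k => (Real.exp (2 * Vt Adj φ k) - 1) * cw) atTop (𝓝 0) := by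
    have h2 : Tendsto (fun k => 2 * Vt Adj φ k) atTop (𝓝 (2 * 0)) :=
      (Vt_tendsto hsum).const_mul 2
    have h3 := (Real.continuous_exp.tendsto (2 * 0)).comp h2
    have h4 := (h3.sub_const 1).mul_const cw
    simpa using h4
  have h2 : ∀ᶠ k in atTop, (Real.exp (2 * Vt Adj φ k) - 1) * cw < δ :=
    h1.eventually_lt_const hδ
  obtain ⟨k, hk1, hk2⟩ := ((eventually_ge_atTop (max (w.1 + 1) 1)).and h2).exists
  refine ⟨k, fun x y hxy => lt_of_le_of_lt ?_ hk2⟩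
  exact K_diff hb hsum htrans hlam htransient w cw hcw k
    (le_trans (le_max_right _ _) hk1) (le_trans (le_max_left _ _) hk1) hxy

end Aux3

section Aux4

variable {S : Type*}

/-- The `i`-th summand of the Martin metric. -/
noncomputable def termF (Adj : S → S → Prop) (φ : MShift Adj → ℝ) (lam : ℝ) (o : S)
    (e : ℕ → (m : ℕ) × (Fin (m + 1) → S)) (C : ℕ → ℝ) (i : ℕ) (x y : MShift Adj) : ℝ :=
  ((2 : ℝ) ^ i * (C i + 1))⁻¹ *
    (|MartinKr Adj φ lam o (cylSigma Adj (e i)) x -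
        MartinKr Adj φ lam o (cylSigma Adj (e i)) y| +
      |Set.indicator (cylSigma Adj (e i)) (fun _ => (1 : ℝ)) x -
        Set.indicator (cylSigma Adj (e i)) (fun _ => (1 : ℝ)) y|)

variable {Adj : S → S → Prop} {φ : MShift Adj → ℝ} {lam : ℝ} {o : S}
  {e : ℕ → (m : ℕ) × (Fin (m + 1) → S)} {C : ℕ → ℝ}

lemma martinRho_eq (x y : MShift Adj) :
    martinRho Adj φ lam o e C x y = ∑' i, termF Adj φ lam o e C i x y := rfl

lemma indR_cases (B : Set (MShift Adj)) (x : MShift Adj) :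
    Set.indicator B (fun _ => (1:ℝ)) x = 0 ∨ Set.indicator B (fun _ => (1:ℝ)) x = 1 := by
  by_cases h : x ∈ B
  · right; rw [Set.indicator_of_mem h]
  · left; rw [Set.indicator_of_notMem h]

lemma abs_indR_sub_le (B : Set (MShift Adj)) (x y : MShift Adj) :
    |Set.indicator B (fun _ => (1:ℝ)) x - Set.indicator B (fun _ => (1:ℝ)) y| ≤ 1 := by
  rcases indR_cases B x with h1 | h1 <;> rcases indR_cases B y with h2 | h2 <;>
    rw [h1, h2] <;> norm_num

section withC
variable (hC : ∀ (i : ℕ) (x : MShift Adj), MartinKr Adj φ lam o (cylSigma Adj (e i)) x ≤ C i)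
  (x0 : MShift Adj)
include hC x0

lemma C_nonneg (i : ℕ) : 0 ≤ C i := le_trans (martinKr_nonneg _ x0) (hC i x0)

lemma wC_pos (i : ℕ) : 0 < ((2:ℝ) ^ i * (C i + 1))⁻¹ := by
  have := C_nonneg hC x0 i
  positivity

lemma wC_le_one (i : ℕ) : ((2:ℝ) ^ i * (C i + 1))⁻¹ ≤ 1 := by
  have h1 := C_nonneg hC x0 i
  have h2 : (1:ℝ) ≤ 2 ^ i := one_le_pow₀ (by norm_num)
  rw [inv_le_one_iff₀]
  right; nlinarith

lemma termF_nonneg (i : ℕ) (x y : MShift Adj) : 0 ≤ termF Adj φ lam o e C i x y := by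
  have := wC_pos hC x0 i
  have h1 := abs_nonneg (MartinKr Adj φ lam o (cylSigma Adj (e i)) x -
    MartinKr Adj φ lam o (cylSigma Adj (e i)) y)
  have h2 := abs_nonneg (Set.indicator (cylSigma Adj (e i)) (fun _ => (1:ℝ)) x -
    Set.indicator (cylSigma Adj (e i)) (fun _ => (1:ℝ)) y)
  rw [termF]
  positivity

lemma termF_le (i : ℕ) (x y : MShift Adj) :
    termF Adj φ lam o e C i x y ≤ (1/2 : ℝ) ^ i := by
  have hc0 := C_nonneg hC x0 i
  have hKx := martinKr_nonneg (Adj := Adj) (φ := φ) (lam := lam) (o := o) (cylSigma Adj (e i)) x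
  have hKy := martinKr_nonneg (Adj := Adj) (φ := φ) (lam := lam) (o := o) (cylSigma Adj (e i)) y
  have hKxC := hC i x
  have hKyC := hC i y
  have h1 : |MartinKr Adj φ lam o (cylSigma Adj (e i)) x -
      MartinKr Adj φ lam o (cylSigma Adj (e i)) y| ≤ C i := by
    rw [abs_sub_le_iff]; constructor <;> linarith
  have h2 := abs_indR_sub_le (cylSigma Adj (e i)) x y
  have hpow : (0:ℝ) < 2 ^ i := by positivity
  have hw : ((2:ℝ) ^ i * (C i + 1))⁻¹ * (C i + 1) = (1/2) ^ i := by
    rw [mul_inv]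
    field_simp
    rw [← mul_pow]; norm_num
  calc termF Adj φ lam o e C i x y
      ≤ ((2:ℝ) ^ i * (C i + 1))⁻¹ * (C i + 1) := by
        rw [termF]
        exact mul_le_mul_of_nonneg_left (by linarith) (wC_pos hC x0 i).le
    _ = (1/2) ^ i := hw

lemma summable_termF (x y : MShift Adj) :
    Summable fun i => termF Adj φ lam o e C i x y :=
  Summable.of_nonneg_of_le (fun i => termF_nonneg hC x0 i x y)
    (fun i => termF_le hC x0 i x y) summable_geometric_two

lemma rho_nonneg (x y : MShift Adj) : 0 ≤ martinRho Adj φ lam o e C x y := by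
  rw [martinRho_eq]
  exact tsum_nonneg fun i => termF_nonneg hC x0 i x y

lemma termF_le_rho (i : ℕ) (x y : MShift Adj) :
    termF Adj φ lam o e C i x y ≤ martinRho Adj φ lam o e C x y := by
  rw [martinRho_eq]
  exact Summable.le_tsum (summable_termF hC x0 x y) i fun j _ => termF_nonneg hC x0 j x y

lemma rho_triangle (x y z : MShift Adj) :
    martinRho Adj φ lam o e C x z ≤
      martinRho Adj φ lam o e C x y + martinRho Adj φ lam o e C y z := by
  rw [martinRho_eq, martinRho_eq, martinRho_eq,
    ← Summable.tsum_add (summable_termF hC x0 x y) (summable_termF hC x0 y z)]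
  refine Summable.tsum_le_tsum (fun i => ?_) (summable_termF hC x0 x z)
    ((summable_termF hC x0 x y).add (summable_termF hC x0 y z))
  rw [termF, termF, termF, ← mul_add]
  refine mul_le_mul_of_nonneg_left ?_ (wC_pos hC x0 i).le
  have t1 := abs_sub_le (MartinKr Adj φ lam o (cylSigma Adj (e i)) x)
    (MartinKr Adj φ lam o (cylSigma Adj (e i)) y) (MartinKr Adj φ lam o (cylSigma Adj (e i)) z)
  have t2 := abs_sub_le (Set.indicator (cylSigma Adj (e i)) (fun _ => (1:ℝ)) x)
    (Set.indicator (cylSigma Adj (e i)) (fun _ => (1:ℝ)) y)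
    (Set.indicator (cylSigma Adj (e i)) (fun _ => (1:ℝ)) z)
  linarith

lemma rho_trunc (x y : MShift Adj) (N : ℕ) :
    martinRho Adj φ lam o e C x y ≤
      (∑ i ∈ Finset.range N, termF Adj φ lam o e C i x y) + 2 * (1/2 : ℝ) ^ N := by
  have hsum := summable_termF hC x0 x y
  rw [martinRho_eq, ← hsum.sum_add_tsum_nat_add N]
  have htail : ∑' i, termF Adj φ lam o e C (i + N) x y ≤ ∑' i : ℕ, (1/2 : ℝ) ^ (i + N) := by
    refine Summable.tsum_le_tsum (fun i => termF_le hC x0 (i + N) x y)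
      ((summable_nat_add_iff N).2 hsum) ?_
    exact (summable_nat_add_iff N).2 summable_geometric_two
  have hgeo : ∑' i : ℕ, (1/2 : ℝ) ^ (i + N) = 2 * (1/2) ^ N := by
    have : ∀ i : ℕ, (1/2 : ℝ) ^ (i + N) = (1/2) ^ i * (1/2) ^ N := fun i => pow_add _ _ _
    rw [tsum_congr this, tsum_mul_right, tsum_geometric_two]
  linarith [htail, hgeo.ge]

end withC

lemma tendsto_zero_of_lt (f : ℕ → ℝ) (h0 : ∀ n, 0 ≤ f n)
    (h : ∀ ε > (0:ℝ), ∀ᶠ n in atTop, f n < ε) : Tendsto f atTop (𝓝 0) := by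
  rw [tendsto_order]
  constructor
  · intro b hb
    exact Eventually.of_forall fun n => lt_of_lt_of_le hb (h0 n)
  · intro b hb
    exact h b hb

end Aux4

section Aux5

variable {S : Type*} {Adj : S → S → Prop} {φ : MShift Adj → ℝ} {lam : ℝ} {o : S}
  {e : ℕ → (m : ℕ) × (Fin (m + 1) → S)} {C : ℕ → ℝ}

lemma termF_le_dist
    (hC : ∀ (i : ℕ) (x : MShift Adj), MartinKr Adj φ lam o (cylSigma Adj (e i)) x ≤ C i)
    (x0 : MShift Adj) (i : ℕ) (x y : MShift Adj) :
    termF Adj φ lam o e C i x y ≤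
      2 * dist
        ((MartinKr Adj φ lam o (cylSigma Adj (e i)) x,
          Set.indicator (cylSigma Adj (e i)) (fun _ => (1:ℝ)) x) : ℝ × ℝ)
        ((MartinKr Adj φ lam o (cylSigma Adj (e i)) y,
          Set.indicator (cylSigma Adj (e i)) (fun _ => (1:ℝ)) y) : ℝ × ℝ) := by
  set d := dist
        ((MartinKr Adj φ lam o (cylSigma Adj (e i)) x,
          Set.indicator (cylSigma Adj (e i)) (fun _ => (1:ℝ)) x) : ℝ × ℝ)
        ((MartinKr Adj φ lam o (cylSigma Adj (e i)) y,
          Set.indicator (cylSigma Adj (e i)) (fun _ => (1:ℝ)) y) : ℝ × ℝ) with hd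
  have h1 : |MartinKr Adj φ lam o (cylSigma Adj (e i)) x -
      MartinKr Adj φ lam o (cylSigma Adj (e i)) y| ≤ d := by
    rw [hd, Prod.dist_eq]
    exact le_trans (le_of_eq (Real.dist_eq _ _).symm) (le_max_left _ _)
  have h2 : |Set.indicator (cylSigma Adj (e i)) (fun _ => (1:ℝ)) x -
      Set.indicator (cylSigma Adj (e i)) (fun _ => (1:ℝ)) y| ≤ d := by
    rw [hd, Prod.dist_eq]
    exact le_trans (le_of_eq (Real.dist_eq _ _).symm) (le_max_right _ _)
  calc termF Adj φ lam o e C i x y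
      ≤ 1 * (|MartinKr Adj φ lam o (cylSigma Adj (e i)) x -
          MartinKr Adj φ lam o (cylSigma Adj (e i)) y| +
        |Set.indicator (cylSigma Adj (e i)) (fun _ => (1:ℝ)) x -
          Set.indicator (cylSigma Adj (e i)) (fun _ => (1:ℝ)) y|) := by
        rw [termF]
        refine mul_le_mul_of_nonneg_right (wC_le_one hC x0 i) ?_
        positivity
    _ ≤ 2 * d := by rw [one_mul]; linarith

/-- Part (1): every sequence admits a `ρ`-Cauchy subsequence. -/
lemma exists_cauchy_subseq
    (hC : ∀ (i : ℕ) (x : MShift Adj), MartinKr Adj φ lam o (cylSigma Adj (e i)) x ≤ C i)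
    (x0 : MShift Adj) (u : ℕ → MShift Adj) :
    ∃ g : ℕ → ℕ, StrictMono g ∧ RhoCauchy Adj φ lam o e C (u ∘ g) := by
  set F : MShift Adj → ℕ → ℝ × ℝ := fun x i =>
    (MartinKr Adj φ lam o (cylSigma Adj (e i)) x,
      Set.indicator (cylSigma Adj (e i)) (fun _ => (1:ℝ)) x) with hF
  set s : Set (ℕ → ℝ × ℝ) := Set.univ.pi fun i => Set.Icc 0 (C i) ×ˢ Set.Icc (0:ℝ) 1 with hs
  have hmem : ∀ n, F (u n) ∈ s := by
    intro n i _
    simp only [hF]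
    refine ⟨⟨martinKr_nonneg _ _, hC i (u n)⟩, ?_, ?_⟩
    · rcases indR_cases (cylSigma Adj (e i)) (u n) with h | h <;> rw [h] <;> norm_num
    · rcases indR_cases (cylSigma Adj (e i)) (u n) with h | h <;> rw [h] <;> norm_num
  have hcomp : IsCompact s := isCompact_univ_pi fun i => isCompact_Icc.prod isCompact_Icc
  obtain ⟨p, -, g, hg, hconv⟩ := hcomp.tendsto_subseq hmem
  refine ⟨g, hg, ?_⟩
  intro ε hε
  -- choose N with 2 * (1/2)^N < ε/2
  obtain ⟨N, hN⟩ := exists_pow_lt_of_lt_one (show (0:ℝ) < ε/4 by linarith)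
    (show (1/2 : ℝ) < 1 by norm_num)
  -- per-coordinate Cauchy
  have hcs : ∀ i : ℕ, CauchySeq (fun n => F (u (g n)) i) := by
    intro i
    exact ((tendsto_pi_nhds.1 hconv) i).cauchySeq
  set δ : ℝ := ε / (4 * (N + 1)) with hδdef
  have hδ : 0 < δ := by positivity
  have hM : ∀ i : ℕ, ∃ M : ℕ, ∀ m ≥ M, ∀ n ≥ M, dist (F (u (g m)) i) (F (u (g n)) i) < δ :=
    fun i => Metric.cauchySeq_iff.1 (hcs i) δ hδ
  choose M hMspec using hM
  set M0 := (Finset.range N).sup M with hM0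
  refine ⟨M0, fun m hm n hn => ?_⟩
  have hsum : ∑ i ∈ Finset.range N, termF Adj φ lam o e C i (u (g m)) (u (g n)) ≤
      (N : ℝ) * (2 * δ) := by
    have hone : ∀ i ∈ Finset.range N, termF Adj φ lam o e C i (u (g m)) (u (g n)) ≤ 2 * δ := by
      intro i hi
      have hMi : M i ≤ M0 := Finset.le_sup hi
      have hdist := hMspec i m (le_trans hMi hm) n (le_trans hMi hn)
      calc termF Adj φ lam o e C i (u (g m)) (u (g n))
          ≤ 2 * dist (F (u (g m)) i) (F (u (g n)) i) := termF_le_dist hC x0 i _ _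
        _ ≤ 2 * δ := by linarith
    calc ∑ i ∈ Finset.range N, termF Adj φ lam o e C i (u (g m)) (u (g n))
        ≤ ∑ _i ∈ Finset.range N, 2 * δ := Finset.sum_le_sum hone
      _ = (N : ℝ) * (2 * δ) := by rw [Finset.sum_const, Finset.card_range]; ring
  have htr := rho_trunc hC x0 (u (g m)) (u (g n)) N
  have hN2 : 2 * (1/2 : ℝ) ^ N < ε / 2 := by linarith
  have hNd : (N : ℝ) * (2 * δ) ≤ ε / 2 := by
    have heq : (N : ℝ) * (2 * (ε / (4 * ((N:ℝ) + 1)))) = ((N:ℝ) * ε) / (2 * ((N:ℝ) + 1)) := by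
      field_simp; ring
    rw [hδdef, heq, div_le_div_iff₀ (by positivity) (by norm_num : (0:ℝ) < 2)]
    have hN0 : (0:ℝ) ≤ (N:ℝ) := Nat.cast_nonneg N
    nlinarith
  show martinRho Adj φ lam o e C (u (g m)) (u (g n)) < ε
  linarith

end Aux5

section Aux6

variable {S : Type*}

/-- Iterated follower sets. -/
def folw (Adj : S → S → Prop) (a : S) : ℕ → Set S
  | 0 => {a}
  | (i + 1) => {c | ∃ b ∈ folw Adj a i, Adj b c}

lemma folw_finite {Adj : S → S → Prop} (hloc : LocFin Adj) (a : S) :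
    ∀ i, (folw Adj a i).Finite
  | 0 => Set.finite_singleton a
  | (i + 1) => by
    have : folw Adj a (i + 1) = ⋃ b ∈ folw Adj a i, {c | Adj b c} := by
      ext c; simp [folw]
    rw [this]
    exact Set.Finite.biUnion (folw_finite hloc a i) (fun b _ => hloc b)

variable {Adj : S → S → Prop} {φ : MShift Adj → ℝ} {lam : ℝ} {o : S}
  {e : ℕ → (m : ℕ) × (Fin (m + 1) → S)} {C : ℕ → ℝ}

/-- A sequence staying in `[a]` has a coordinatewise-converging subsequence. -/
lemma exists_symbolic_limit (hloc : LocFin Adj) (a : S) (v : ℕ → MShift Adj)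
    (hv : ∀ n, (v n).1 0 = a) :
    ∃ (y : MShift Adj) (h : ℕ → ℕ), StrictMono h ∧
      ∀ i, ∀ᶠ n in atTop, (v (h n)).1 i = y.1 i := by
  letI : TopologicalSpace S := ⊥
  haveI : DiscreteTopology S := ⟨rfl⟩
  set Ks : Set (ℕ → S) :=
    {x | (∀ i, x i ∈ folw Adj a i) ∧ ∀ i, Adj (x i) (x (i + 1))} with hKs
  have hKsub : Ks ⊆ Set.univ.pi (fun i => folw Adj a i) := fun x hx i _ => hx.1 i
  have hKeq : Ks = (⋂ i, (fun x : ℕ → S => x i) ⁻¹' (folw Adj a i)) ∩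
      (⋂ i, {x : ℕ → S | Adj (x i) (x (i + 1))}) := by
    ext x
    simp only [hKs, Set.mem_setOf_eq, Set.mem_inter_iff, Set.mem_iInter, Set.mem_preimage]
  have hclosed : IsClosed Ks := by
    rw [hKeq]
    refine IsClosed.inter (isClosed_iInter fun i => ?_) (isClosed_iInter fun i => ?_)
    · exact (isClosed_discrete _).preimage (continuous_apply i)
    · have : {x : ℕ → S | Adj (x i) (x (i + 1))} =
          (fun x : ℕ → S => (x i, x (i + 1))) ⁻¹' {p : S × S | Adj p.1 p.2} := rfl
      rw [this]
      exact (isClosed_discrete _).preimage ((continuous_apply i).prodMk (continuous_apply (i + 1)))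
  have hcomp : IsCompact Ks :=
    (isCompact_univ_pi fun i => (folw_finite hloc a i).isCompact).of_isClosed_subset
      hclosed hKsub
  have hmem : ∀ n, (v n).1 ∈ Ks := by
    intro n
    refine ⟨?_, (v n).2⟩
    intro i
    induction i with
    | zero => exact (hv n)
    | succ i ih => exact ⟨(v n).1 i, ih, (v n).2 i⟩
  obtain ⟨y0, hy0, h, hh, hconv⟩ := hcomp.tendsto_subseq hmem
  refine ⟨⟨y0, hy0.2⟩, h, hh, fun i => ?_⟩
  have := tendsto_pi_nhds.1 hconv i
  rw [nhds_discrete, tendsto_pure] at this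
  exact this

lemma eventually_agr {v : ℕ → MShift Adj} {y : MShift Adj}
    (h : ∀ i, ∀ᶠ n in atTop, (v n).1 i = y.1 i) (k : ℕ) :
    ∀ᶠ n in atTop, Agr k (v n) y := by
  induction k with
  | zero => exact Eventually.of_forall (fun n i hi => absurd hi (Nat.not_lt_zero i))
  | succ k ih =>
    filter_upwards [ih, h k] with n h1 h2 i hi
    rcases Nat.lt_succ_iff_lt_or_eq.1 hi with h' | h'
    · exact h1 i h'
    · subst h'; exact h2

lemma rho_tendsto_of_agr
    (hb : ∀ m, BddAbove (varSet Adj φ m)) (hsum : Summable (Var Adj φ))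
    (htrans : TransitiveShift Adj) (hlam : 0 < lam) (htransient : Transient Adj φ lam)
    (hC : ∀ (i : ℕ) (x : MShift Adj), MartinKr Adj φ lam o (cylSigma Adj (e i)) x ≤ C i)
    (x0 : MShift Adj) (v : ℕ → MShift Adj) (y : MShift Adj)
    (hagr : ∀ k, ∀ᶠ n in atTop, Agr k (v n) y) :
    Tendsto (fun n => martinRho Adj φ lam o e C (v n) y) atTop (𝓝 0) := by
  apply tendsto_zero_of_lt _ (fun n => rho_nonneg hC x0 _ _)
  intro ε hε
  obtain ⟨N, hN⟩ := exists_pow_lt_of_lt_one (show (0:ℝ) < ε/4 by linarith)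
    (by norm_num : (1/2:ℝ) < 1)
  set δ' : ℝ := ε / (2 * (N + 1)) with hδ'
  have hδ'pos : 0 < δ' := by positivity
  have hterm : ∀ i : ℕ, ∀ᶠ n in atTop, termF Adj φ lam o e C i (v n) y < δ' := by
    intro i
    obtain ⟨k, hk⟩ := K_cont hb hsum htrans hlam htransient (e i) (C i) (hC i) hδ'pos
    filter_upwards [hagr (max k ((e i).1 + 1))] with n hn
    have h1 : |MartinKr Adj φ lam o (cylSigma Adj (e i)) (v n) -
        MartinKr Adj φ lam o (cylSigma Adj (e i)) y| < δ' :=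
      hk _ _ (hn.mono2 (le_max_left _ _))
    have h2 : Set.indicator (cylSigma Adj (e i)) (fun _ => (1:ℝ)) (v n) -
        Set.indicator (cylSigma Adj (e i)) (fun _ => (1:ℝ)) y = 0 := by
      rw [cylSigma_localR (e i) (hn.mono2 (le_max_right _ _)), sub_self]
    calc termF Adj φ lam o e C i (v n) y
        ≤ 1 * (|MartinKr Adj φ lam o (cylSigma Adj (e i)) (v n) -
            MartinKr Adj φ lam o (cylSigma Adj (e i)) y| +
          |Set.indicator (cylSigma Adj (e i)) (fun _ => (1:ℝ)) (v n) -
            Set.indicator (cylSigma Adj (e i)) (fun _ => (1:ℝ)) y|) := by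
          rw [termF]
          refine mul_le_mul_of_nonneg_right (wC_le_one hC x0 i) (by positivity)
      _ < δ' := by rw [h2, abs_zero, one_mul, add_zero]; exact h1
  have hsumev : ∀ᶠ n in atTop, ∀ i ∈ Finset.range N,
      termF Adj φ lam o e C i (v n) y < δ' :=
    (eventually_all_finset (Finset.range N)).2 fun i _ => hterm i
  filter_upwards [hsumev] with n hn
  have htr := rho_trunc hC x0 (v n) y N
  have hsum2 : ∑ i ∈ Finset.range N, termF Adj φ lam o e C i (v n) y ≤ (N:ℝ) * δ' := by
    calc ∑ i ∈ Finset.range N, termF Adj φ lam o e C i (v n) y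
        ≤ ∑ _i ∈ Finset.range N, δ' := Finset.sum_le_sum fun i hi => (hn i hi).le
      _ = (N:ℝ) * δ' := by rw [Finset.sum_const, Finset.card_range]; simp
  have hNd : (N:ℝ) * δ' ≤ ε / 2 := by
    have heq : (N : ℝ) * (ε / (2 * ((N:ℝ) + 1))) = ((N:ℝ) * ε) / (2 * ((N:ℝ) + 1)) := by ring
    rw [hδ', heq, div_le_div_iff₀ (by positivity) (by norm_num : (0:ℝ) < 2)]
    have hN0 : (0:ℝ) ≤ (N:ℝ) := Nat.cast_nonneg N
    nlinarith
  have hN2 : 2 * (1/2 : ℝ) ^ N < ε / 2 := by linarith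
  linarith

/-- Main limiting lemma: a `ρ`-Cauchy sequence with a subsequence staying in a fixed
cylinder `[a]` converges to some point of the shift space. -/
lemma main_limit
    (hb : ∀ m, BddAbove (varSet Adj φ m)) (hsum : Summable (Var Adj φ))
    (htrans : TransitiveShift Adj) (hlam : 0 < lam) (htransient : Transient Adj φ lam)
    (hloc : LocFin Adj)
    (hC : ∀ (i : ℕ) (x : MShift Adj), MartinKr Adj φ lam o (cylSigma Adj (e i)) x ≤ C i)
    (x0 : MShift Adj) (u : ℕ → MShift Adj) (hu : RhoCauchy Adj φ lam o e C u)
    (a : S) (g : ℕ → ℕ) (hg : StrictMono g) (hga : ∀ n, (u (g n)).1 0 = a) :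
    ∃ y, RhoTendsto Adj φ lam o e C u y := by
  obtain ⟨y, h, hh, hcoord⟩ := exists_symbolic_limit hloc a (fun n => u (g n)) hga
  have htend : Tendsto (fun n => martinRho Adj φ lam o e C (u (g (h n))) y) atTop (𝓝 0) :=
    rho_tendsto_of_agr hb hsum htrans hlam htransient hC x0 _ y
      (fun k => eventually_agr hcoord k)
  refine ⟨y, ?_⟩
  apply tendsto_zero_of_lt _ (fun n => rho_nonneg hC x0 _ _)
  intro ε hε
  obtain ⟨N, hN⟩ := hu (ε/2) (by linarith)
  obtain ⟨m, hm1, hm2⟩ :=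
    ((htend.eventually_lt_const (show (0:ℝ) < ε/2 by linarith)).and
      (eventually_ge_atTop N)).exists
  rw [eventually_atTop]
  refine ⟨N, fun n hn => ?_⟩
  have hghm : N ≤ g (h m) := le_trans hm2 (le_trans hh.le_apply hg.le_apply)
  have hcauchy := hN n hn (g (h m)) hghm
  have htri := rho_triangle hC x0 (u n) (u (g (h m))) y
  linarith

end Aux6

section Final

variable {S : Type*} {Adj : S → S → Prop} {φ : MShift Adj → ℝ} {lam : ℝ} {o : S}
  {e : ℕ → (m : ℕ) × (Fin (m + 1) → S)} {C : ℕ → ℝ}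

lemma single_cyl_rho_lb
    (hC : ∀ (i : ℕ) (x : MShift Adj), MartinKr Adj φ lam o (cylSigma Adj (e i)) x ≤ C i)
    (x0 : MShift Adj) (a : S) (i0 : ℕ) (hi0 : e i0 = ⟨0, fun _ => a⟩)
    (z xx : MShift Adj) (hxx : xx.1 0 = a) (hz : z.1 0 ≠ a) :
    ((2:ℝ) ^ i0 * (C i0 + 1))⁻¹ ≤ martinRho Adj φ lam o e C z xx := by
  have hmem : ∀ y : MShift Adj, y ∈ cylSigma Adj (e i0) ↔ y.1 0 = a := by
    intro y
    rw [hi0]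
    simp only [cylSigma, Set.mem_setOf_eq]
    constructor
    · intro hy
      exact hy ⟨0, Nat.one_pos⟩
    · intro hy i
      have hi : (i : ℕ) = 0 := by have := i.isLt; omega
      rw [hi]
      exact hy
  have hindx : Set.indicator (cylSigma Adj (e i0)) (fun _ => (1:ℝ)) xx = 1 :=
    Set.indicator_of_mem ((hmem xx).2 hxx) _
  have hindz : Set.indicator (cylSigma Adj (e i0)) (fun _ => (1:ℝ)) z = 0 :=
    Set.indicator_of_notMem (fun hyy => hz ((hmem z).1 hyy)) _
  have habs := abs_nonneg (MartinKr Adj φ lam o (cylSigma Adj (e i0)) z -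
    MartinKr Adj φ lam o (cylSigma Adj (e i0)) xx)
  have h1 : (1:ℝ) ≤ |MartinKr Adj φ lam o (cylSigma Adj (e i0)) z -
      MartinKr Adj φ lam o (cylSigma Adj (e i0)) xx| +
      |Set.indicator (cylSigma Adj (e i0)) (fun _ => (1:ℝ)) z -
        Set.indicator (cylSigma Adj (e i0)) (fun _ => (1:ℝ)) xx| := by
    rw [hindx, hindz]
    simp only [zero_sub, abs_neg, abs_one]
    linarith
  calc ((2:ℝ) ^ i0 * (C i0 + 1))⁻¹ = ((2:ℝ) ^ i0 * (C i0 + 1))⁻¹ * 1 := (mul_one _).symm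
    _ ≤ termF Adj φ lam o e C i0 z xx := by
        rw [termF]
        exact mul_le_mul_of_nonneg_left h1 (wC_pos hC x0 i0).le
    _ ≤ martinRho Adj φ lam o e C z xx := termF_le_rho hC x0 i0 z xx

end Final

/-- The Martin compactification is compact, the Martin boundary is closed and non-empty,
and sequences converging to a boundary point escape every compact set.  Stated
sequentially: (1) every sequence has a `ρ`-Cauchy subsequence (compactness of the
completion); (2) there is a `ρ`-Cauchy sequence with no limit in `X⁺` (the boundary is
non-empty); (3) around every point of `X⁺` there is a `ρ`-ball in which every `ρ`-Cauchy
sequence has a limit in `X⁺` (the boundary is closed, i.e. `X⁺` is open in the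
compactification); (4) a `ρ`-Cauchy sequence with no limit in `X⁺` eventually leaves
every cylinder `[a]`, i.e. every compact subset of `(X⁺, d)`. -/
theorem martin_compactification_compact [Countable S] [Infinite S]
    (Adj : S → S → Prop) (htrans : TransitiveShift Adj) (hloc : LocFin Adj)
    (φ : MShift Adj → ℝ) (hvar : SummableVar Adj φ) (lam : ℝ) (hlam : 0 < lam)
    (htransient : Transient Adj φ lam) (o : S)
    (e : ℕ → (m : ℕ) × (Fin (m + 1) → S)) (he : Function.Surjective e)
    (C : ℕ → ℝ) (hC : ∀ (i : ℕ) (x : MShift Adj),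
      MartinKr Adj φ lam o (cylSigma Adj (e i)) x ≤ C i) :
    (∀ u : ℕ → MShift Adj, ∃ g : ℕ → ℕ, StrictMono g ∧
        RhoCauchy Adj φ lam o e C (u ∘ g)) ∧
    (∃ u : ℕ → MShift Adj, RhoCauchy Adj φ lam o e C u ∧
        ¬∃ x : MShift Adj, RhoTendsto Adj φ lam o e C u x) ∧
    (∀ x : MShift Adj, ∃ ε > (0 : ℝ), ∀ u : ℕ → MShift Adj,
        RhoCauchy Adj φ lam o e C u →
        (∀ᶠ n in Filter.atTop, martinRho Adj φ lam o e C (u n) x < ε) →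
        ∃ y : MShift Adj, RhoTendsto Adj φ lam o e C u y) ∧
    (∀ u : ℕ → MShift Adj, RhoCauchy Adj φ lam o e C u →
        (¬∃ x : MShift Adj, RhoTendsto Adj φ lam o e C u x) →
        ∀ a : S, ∀ᶠ n in Filter.atTop, (u n).1 0 ≠ a) := by

  obtain ⟨_, x0, -, -⟩ := htrans o o
  obtain ⟨hb, hsum⟩ := hvar
  refine ⟨?_, ?_, ?_, ?_⟩
  · -- (1) sequential compactness
    exact fun u => exists_cauchy_subseq hC x0 u
  · -- (2) the boundary is non-empty
    set emb := Infinite.natEmbedding S with hemb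
    choose k w hw1 hw2 using fun n : ℕ => htrans (emb n) (emb n)
    obtain ⟨g, hg, hgc⟩ := exists_cauchy_subseq hC x0 w
    refine ⟨w ∘ g, hgc, ?_⟩
    rintro ⟨x, hx⟩
    obtain ⟨i0, hi0⟩ := he ⟨0, fun _ => x.1 0⟩
    have hev := hx.eventually_lt_const (wC_pos hC x0 i0)
    have hev2 : ∀ᶠ n in Filter.atTop, emb (g n) = x.1 0 := by
      filter_upwards [hev] with n hn
      by_contra hne
      have hz : (w (g n)).1 0 ≠ x.1 0 := by rw [hw1 (g n)]; exact hne
      exact absurd hn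
        (not_lt.2 (single_cyl_rho_lb hC x0 (x.1 0) i0 hi0 (w (g n)) x rfl hz))
    obtain ⟨N, hN⟩ := Filter.eventually_atTop.1 hev2
    have h1 : emb (g N) = x.1 0 := hN N le_rfl
    have h2 : emb (g (N + 1)) = x.1 0 := hN (N + 1) (by omega)
    have h3 : g N = g (N + 1) := emb.injective (h1.trans h2.symm)
    exact absurd h3 (ne_of_lt (hg (Nat.lt_succ_self N)))
  · -- (3) the boundary is closed
    intro x
    obtain ⟨i0, hi0⟩ := he ⟨0, fun _ => x.1 0⟩
    refine ⟨((2:ℝ) ^ i0 * (C i0 + 1))⁻¹, wC_pos hC x0 i0, ?_⟩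
    intro u hu hev
    have hev2 : ∀ᶠ n in Filter.atTop, (u n).1 0 = x.1 0 := by
      filter_upwards [hev] with n hn
      by_contra hne
      exact absurd hn
        (not_lt.2 (single_cyl_rho_lb hC x0 (x.1 0) i0 hi0 (u n) x rfl hne))
    obtain ⟨N, hN⟩ := Filter.eventually_atTop.1 hev2
    exact main_limit hb hsum htrans hlam htransient hloc hC x0 u hu (x.1 0)
      (fun n => n + N) (strictMono_id.add_const N) (fun n => hN (n + N) (by omega))
  · -- (4) escape to infinity
    intro u hu hnolim a
    by_contra hcon
    rw [Filter.not_eventually] at hcon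
    have hfreq : ∃ᶠ n in Filter.atTop, (u n).1 0 = a :=
      hcon.mono fun n hn => not_not.1 hn
    obtain ⟨g, hg, hga⟩ := extraction_of_frequently_atTop hfreq
    exact hnolim (main_limit hb hsum htrans hlam htransient hloc hC x0 u hu a g hg hga)
end
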